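/- arXiv:2305.08125 — 4 statements merged into one kernel-verified Lean document; each statement's English description precedes it below -/
import Mathlib

section
/- Let u_1, …, u_n be positive integers, let t and k be positive integers with t ≤ u_1 + … + u_n, and suppose that every subset S ⊆ {1,…,n} with Σ_{i∈S} u_i = t has |S| = k. Set T = 3·(u_1 + … + u_n). Let E be the PB instance with projects C = {x_1,…,x_n} ∪ {y_1,…,y_{2k+1}} ∪ {d_1,…,d_{k+1}} ∪ {p}, costs cost(x_i) = T + u_i, cost(y_j) = T, cost(d_j) = T − t + 1, cost(p) = T − t, a single voter who approves exactly the projects in C ∖ {x_1,…,x_n}, and budget B = (k+1)T, where GreedyAV is run with the tie-breaking order x_1 ≻ … ≻ x_n ≻ y_1 ≻ … ≻ y_{2k+1} ≻ d_1 ≻ … ≻ d_{k+1} ≻ p. Then there exists a set F of at most k approval flips such that p ∈ GreedyAV(E_F) if and only if there exists S ⊆ {1,…,n} with |S| = k and Σ_{i∈S} u_i = t. -/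
structure PB (C V : Type) [Fintype C] [DecidableEq C] [Fintype V] [DecidableEq V] where
  A : V → Finset C
  budget : ℕ
  cost : C → ℕ

namespace PB

variable {C V : Type} [Fintype C] [DecidableEq C] [Fintype V] [DecidableEq V]

/-- The approval score of a project: the number of voters approving it. -/
def score (E : PB C V) (c : C) : ℕ :=
  (Finset.univ.filter fun v => c ∈ E.A v).card

/-- Perform the approval flips in `F`: voter `v`'s approval set becomes
`A v ∆ {c : (v, c) ∈ F}`. -/
def flip (E : PB C V) (F : Finset (V × C)) : PB C V :=
  { E with A := fun v => symmDiff (E.A v) ((F.filter fun q => q.1 = v).image Prod.snd) }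

/-- Greedily process the given list of projects: starting from `W = ∅`,
add the currently considered project whenever it fits in the budget. -/
def greedyFold (budget : ℕ) (cost : C → ℕ) (order : List C) : Finset C :=
  order.foldl (fun W c => if (∑ x ∈ W, cost x) + cost c ≤ budget then insert c W else W) ∅

/-- The order in which GreedyAV considers the projects: non-increasing approval
score, ties broken in favor of `prec`-earlier projects. -/
noncomputable def consOrderAV (E : PB C V) (prec : C → C → Bool) : List C :=
  (Finset.univ : Finset C).toList.mergeSort fun c c' =>
    decide (E.score c' < E.score c) ||
      (decide (E.score c = E.score c') && (prec c c' || decide (c = c')))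

/-- GreedyAV with tie-breaking given by the strict relation `prec`. -/
noncomputable def greedyAV (E : PB C V) (prec : C → C → Bool) : Finset C :=
  greedyFold E.budget E.cost (consOrderAV E prec)

/-- The order in which GreedyCost considers the projects: non-increasing
approval-score-to-cost ratio (compared by cross-multiplication), ties broken in
favor of `prec`-earlier projects. -/
noncomputable def consOrderCost (E : PB C V) (prec : C → C → Bool) : List C :=
  (Finset.univ : Finset C).toList.mergeSort fun c c' =>
    decide (E.score c' * E.cost c < E.score c * E.cost c') ||
      (decide (E.score c * E.cost c' = E.score c' * E.cost c) && (prec c c' || decide (c = c')))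

/-- GreedyCost with tie-breaking given by the strict relation `prec`. -/
noncomputable def greedyCost (E : PB C V) (prec : C → C → Bool) : Finset C :=
  greedyFold E.budget E.cost (consOrderCost E prec)

/-- Cheaper-first tie-breaking: ties in approval score are broken in favor of
the cheaper project, with remaining ties broken by the residual order `prec0`. -/
def cheaperFirst (cost : C → ℕ) (prec0 : C → C → Bool) : C → C → Bool :=
  fun c c' => decide (cost c < cost c') || (decide (cost c = cost c') && prec0 c c')

end PB

/-! Statement 0: the correctness of the reduction from Sized Subset Sum to
GreedyAV-Flip-Bribery (Theorem `greedy-av-pb-npc`). -/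

/-- The projects of the reduction: `x_1, …, x_n`, `y_1, …, y_{2k+1}`,
`d_1, …, d_{k+1}`, and `p`. -/
abbrev Proj (n k : ℕ) := (Fin n ⊕ Fin (2 * k + 1)) ⊕ (Fin (k + 1) ⊕ Unit)

/-- The preferred project `p`. -/
def pProj (n k : ℕ) : Proj n k := Sum.inr (Sum.inr ())

/-- Ranks realizing the tie-breaking order `x_1 ≻ … ≻ x_n ≻ y_1 ≻ … ≻ y_{2k+1}
≻ d_1 ≻ … ≻ d_{k+1} ≻ p` (smaller rank = earlier). -/
def rank0 (n k : ℕ) : Proj n k → ℕ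
  | .inl (.inl i) => i
  | .inl (.inr j) => n + j
  | .inr (.inl j) => n + (2 * k + 1) + j
  | .inr (.inr _) => n + (2 * k + 1) + (k + 1)

/-- The costs: `cost(x_i) = T + u_i`, `cost(y_j) = T`, `cost(d_j) = T - t + 1`,
`cost(p) = T - t`, where `T = 3·(u_1 + … + u_n)`. -/
def cost0 {n : ℕ} (u : Fin n → ℕ) (t k : ℕ) : Proj n k → ℕ
  | .inl (.inl i) => 3 * (∑ j, u j) + u i
  | .inl (.inr _) => 3 * (∑ j, u j)
  | .inr (.inl _) => 3 * (∑ j, u j) - t + 1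
  | .inr (.inr _) => 3 * (∑ j, u j) - t

/-- Is a project one of the `x_i`? -/
def isX {n k : ℕ} : Proj n k → Bool
  | .inl (.inl _) => true
  | _ => false

/-- The PB instance of the reduction: a single voter approving everything
except the `x_i`, and budget `(k+1)·T`. -/
def E0 {n : ℕ} (u : Fin n → ℕ) (t k : ℕ) : PB (Proj n k) Unit where
  A := fun _ => Finset.univ.filter fun c => isX c = false
  budget := (k + 1) * (3 * ∑ j, u j)
  cost := cost0 u t k


/-! ### Auxiliary greedy-fold lemmas -/

namespace PBaux

variable {C : Type*} [DecidableEq C]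

def gfold (B : ℕ) (cost : C → ℕ) (W : Finset C) (L : List C) : Finset C :=
  L.foldl (fun W c => if (∑ x ∈ W, cost x) + cost c ≤ B then insert c W else W) W

@[simp] lemma gfold_nil (B : ℕ) (cost : C → ℕ) (W : Finset C) : gfold B cost W [] = W := rfl

lemma gfold_cons (B : ℕ) (cost : C → ℕ) (W : Finset C) (c : C) (L : List C) :
    gfold B cost W (c :: L) =
      gfold B cost (if (∑ x ∈ W, cost x) + cost c ≤ B then insert c W else W) L := rfl

lemma gfold_append (B : ℕ) (cost : C → ℕ) (W : Finset C) (L1 L2 : List C) :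
    gfold B cost W (L1 ++ L2) = gfold B cost (gfold B cost W L1) L2 :=
  List.foldl_append

lemma subset_gfold (B : ℕ) (cost : C → ℕ) : ∀ (L : List C) (W : Finset C), W ⊆ gfold B cost W L := by
  intro L
  induction L with
  | nil => intro W; simp
  | cons c L ih =>
    intro W
    rw [gfold_cons]
    refine subset_trans ?_ (ih _)
    split <;> [exact Finset.subset_insert _ _; exact subset_rfl]

lemma gfold_subset (B : ℕ) (cost : C → ℕ) :
    ∀ (L : List C) (W : Finset C), gfold B cost W L ⊆ W ∪ L.toFinset := by
  intro L
  induction L with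
  | nil => intro W; simp
  | cons c L ih =>
    intro W
    rw [gfold_cons]
    refine subset_trans (ih _) ?_
    intro x hx
    split at hx <;> simp only [Finset.mem_union, Finset.mem_insert, List.toFinset_cons,
      List.mem_toFinset] at hx ⊢ <;> tauto

lemma gfold_none (B : ℕ) (cost : C → ℕ) :
    ∀ (L : List C) (W : Finset C), (∀ c ∈ L, B < (∑ x ∈ W, cost x) + cost c) →
      gfold B cost W L = W := by
  intro L
  induction L with
  | nil => intro W _; simp
  | cons c L ih =>
    intro W h
    rw [gfold_cons, if_neg (by exact Nat.not_le.2 (h c (by simp)))]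
    exact ih W fun c' hc' => h c' (by simp [hc'])

lemma gfold_all (B : ℕ) (cost : C → ℕ) :
    ∀ (L : List C) (W : Finset C), L.Nodup → (∀ c ∈ L, c ∉ W) →
      (∑ x ∈ W, cost x) + (L.map cost).sum ≤ B →
      gfold B cost W L = W ∪ L.toFinset ∧
        (∑ x ∈ gfold B cost W L, cost x) = (∑ x ∈ W, cost x) + (L.map cost).sum := by
  intro L
  induction L with
  | nil => intro W _ _ _; simp
  | cons c L ih =>
    intro W hnd hW hB
    have hcW : c ∉ W := hW c (by simp)
    have hfit : (∑ x ∈ W, cost x) + cost c ≤ B := by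
      simp only [List.map_cons, List.sum_cons] at hB; omega
    rw [gfold_cons, if_pos hfit]
    have hsum : (∑ x ∈ insert c W, cost x) = (∑ x ∈ W, cost x) + cost c := by
      rw [Finset.sum_insert hcW]; omega
    have hnd' := (List.nodup_cons.1 hnd).2
    have hW' : ∀ c' ∈ L, c' ∉ insert c W := by
      intro c' hc'
      simp only [Finset.mem_insert, not_or]
      exact ⟨fun h => (List.nodup_cons.1 hnd).1 (h ▸ hc'), hW c' (by simp [hc'])⟩
    have hB' : (∑ x ∈ insert c W, cost x) + (L.map cost).sum ≤ B := by
      rw [hsum]; simp only [List.map_cons, List.sum_cons] at hB; omega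
    obtain ⟨h1, h2⟩ := ih (insert c W) hnd' hW' hB'
    refine ⟨?_, ?_⟩
    · rw [h1]; ext x; simp only [Finset.mem_union, Finset.mem_insert, List.toFinset_cons,
        List.mem_toFinset]; tauto
    · rw [h2, hsum]; simp only [List.map_cons, List.sum_cons]; omega

lemma gfold_mem_le (B : ℕ) (cost : C → ℕ) (p : C) :
    ∀ (L : List C) (W : Finset C), p ∉ W → p ∈ gfold B cost W L →
      ∃ W', W ⊆ W' ∧ (∑ x ∈ W', cost x) + cost p ≤ B := by
  intro L
  induction L with
  | nil => intro W hp hmem; simp at hmem; exact absurd hmem hp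
  | cons c L ih =>
    intro W hp hmem
    rw [gfold_cons] at hmem
    by_cases hfit : (∑ x ∈ W, cost x) + cost c ≤ B
    · rw [if_pos hfit] at hmem
      by_cases hpc : p ∈ insert c W
      · have hpcc : p = c := by
          rcases Finset.mem_insert.1 hpc with h | h
          · exact h
          · exact absurd h hp
        exact ⟨W, subset_rfl, hpcc ▸ hfit⟩
      · obtain ⟨W', h1, h2⟩ := ih _ hpc hmem
        exact ⟨W', subset_trans (Finset.subset_insert _ _) h1, h2⟩
    · rw [if_neg hfit] at hmem
      exact ih _ hp hmem

omit [DecidableEq C] in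
lemma sum_map_toList (s : Finset C) (f : C → ℕ) : (s.toList.map f).sum = ∑ i ∈ s, f i := by
  have h : ∑ i ∈ s, f i = (Multiset.map f s.val).sum := rfl
  rw [h, ← Multiset.coe_toList s.val, Multiset.map_coe, Multiset.sum_coe]
  rfl

lemma sum_sort_map {α : Type*} [LinearOrder α] (s : Finset α) (f : α → ℕ) :
    ((s.sort (· ≤ ·)).map f).sum = ∑ i ∈ s, f i := by
  rw [← sum_map_toList]
  exact List.Perm.sum_eq (List.Perm.map f (Finset.sort_perm_toList _ _))

lemma sorted_append_aux {l1 l2 : List ℕ} (m : ℕ) (h1 : l1.Pairwise (· < ·))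
    (h2 : l2.Pairwise (· < ·)) (b1 : ∀ a ∈ l1, a < m) (b2 : ∀ b ∈ l2, m ≤ b) :
    (l1 ++ l2).Pairwise (· < ·) := by
  rw [List.pairwise_append]
  exact ⟨h1, h2, fun a ha b hb => lt_of_lt_of_le (b1 a ha) (b2 b hb)⟩

/-- The mergeSort used in `consOrderAV` produces any sorted nodup enumeration. -/
lemma consOrderAV_eq {C V : Type} [Fintype C] [DecidableEq C] [Fintype V] [DecidableEq V]
    (E : PB C V) (prec : C → C → Bool) (key : C → ℕ)
    (hkey : ∀ a b, (decide (E.score b < E.score a) ||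
        (decide (E.score a = E.score b) && (prec a b || decide (a = b)))) = true
      ↔ key a ≤ key b)
    (L : List C) (hmem : ∀ c, c ∈ L) (hsort : (L.map key).Pairwise (· < ·)) :
    PB.consOrderAV E prec = L := by
  classical
  have hndk : (L.map key).Nodup := hsort.nodup
  have hnd : L.Nodup := hndk.of_map _
  set le : C → C → Bool := fun c c' => decide (E.score c' < E.score c) ||
      (decide (E.score c = E.score c') && (prec c c' || decide (c = c'))) with hle
  have hkey' : ∀ a b, le a b = true ↔ key a ≤ key b := fun a b => hkey a b
  have hinj : ∀ a b, a ∈ L → b ∈ L → key a = key b → a = b := by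
    intro a b ha hb hab
    by_contra hne
    have := List.inj_on_of_nodup_map hndk ha hb hab
    exact hne this
  have htrans : ∀ a b c, le a b = true → le b c = true → le a c = true := by
    intro a b c h1 h2
    rw [hkey'] at h1 h2 ⊢
    omega
  have htot : ∀ a b, (le a b || le b a) = true := by
    intro a b
    rw [Bool.or_eq_true, hkey', hkey']
    omega
  have hsorted1 := List.pairwise_mergeSort htrans htot (Finset.univ : Finset C).toList
  have hperm : ((Finset.univ : Finset C).toList.mergeSort le).Perm L := by
    refine (List.mergeSort_perm _ _).trans ?_
    refine List.perm_of_nodup_nodup_toFinset_eq (Finset.nodup_toList _) hnd ?_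
    ext c; simp [hmem]
  have hanti : IsAntisymm C (fun a b => le a b = true) := by
    constructor
    intro a b h1 h2
    rw [hkey'] at h1 h2
    exact hinj a b (hmem a) (hmem b) (le_antisymm h1 h2)
  have hsortL : List.Pairwise (fun a b => le a b = true) L := by
    have h := hsort
    rw [List.pairwise_map] at h
    exact h.imp (fun hab => (hkey' _ _).2 (le_of_lt hab))
  exact List.Perm.eq_of_pairwise' hsorted1 hsortL hperm

end PBaux


/-! ### The reduction: explicit order characterization -/

namespace PBred

open PBaux

variable (n k : ℕ)

def xp (i : Fin n) : Proj n k := Sum.inl (Sum.inl i)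
def yp (j : Fin (2 * k + 1)) : Proj n k := Sum.inl (Sum.inr j)
def dp (j : Fin (k + 1)) : Proj n k := Sum.inr (Sum.inl j)

variable (F : Finset (Unit × Proj n k))

def GF : Finset (Proj n k) := F.image Prod.snd
def XF : Finset (Fin n) := Finset.univ.filter fun i => xp n k i ∈ GF n k F
def GYF : Finset (Fin (2 * k + 1)) := Finset.univ.filter fun j => yp n k j ∈ GF n k F
def GDF : Finset (Fin (k + 1)) := Finset.univ.filter fun j => dp n k j ∈ GF n k F

def seg1 : List (Proj n k) := ((XF n k F).sort (· ≤ ·)).map (xp n k)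
def seg2 : List (Proj n k) := (((GYF n k F)ᶜ).sort (· ≤ ·)).map (yp n k)
def seg3 : List (Proj n k) := (((GDF n k F)ᶜ).sort (· ≤ ·)).map (dp n k)
def seg4 : List (Proj n k) := if pProj n k ∈ GF n k F then [] else [pProj n k]
def seg5 : List (Proj n k) := (((XF n k F)ᶜ).sort (· ≤ ·)).map (xp n k)
def seg6 : List (Proj n k) := ((GYF n k F).sort (· ≤ ·)).map (yp n k)
def seg7 : List (Proj n k) := ((GDF n k F).sort (· ≤ ·)).map (dp n k)
def seg8 : List (Proj n k) := if pProj n k ∈ GF n k F then [pProj n k] else []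

def LF : List (Proj n k) :=
  seg1 n k F ++ (seg2 n k F ++ (seg3 n k F ++ (seg4 n k F ++
    (seg5 n k F ++ (seg6 n k F ++ (seg7 n k F ++ seg8 n k F))))))

variable (u : Fin n → ℕ) (t : ℕ)

def keyF : Proj n k → ℕ :=
  fun c => (1 - ((E0 u t k).flip F).score c) * (n + 3 * k + 3) + rank0 n k c

lemma score_unit {C : Type} [Fintype C] [DecidableEq C] (E : PB C Unit) (c : C) :
    E.score c = if c ∈ E.A () then 1 else 0 := by
  unfold PB.score
  have h : (Finset.univ : Finset Unit) = {()} := rfl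
  rw [h, Finset.filter_singleton]
  split <;> simp

lemma flipA : ((E0 u t k).flip F).A () =
    symmDiff (Finset.univ.filter fun c => isX c = false) (GF n k F) := by
  show symmDiff ((E0 u t k).A ()) ((F.filter fun q => q.1 = ()).image Prod.snd) = _
  rw [Finset.filter_true_of_mem (fun q _ => Subsingleton.elim q.1 ())]
  rfl

lemma score_x (i : Fin n) :
    ((E0 u t k).flip F).score (xp n k i) = if i ∈ XF n k F then 1 else 0 := by
  rw [score_unit, flipA]
  have h : (xp n k i ∈ symmDiff (Finset.univ.filter fun c => isX c = false) (GF n k F))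
      ↔ i ∈ XF n k F := by
    simp [Finset.mem_symmDiff, XF]; simp [xp, isX]
  simp only [h]

lemma score_y (j : Fin (2 * k + 1)) :
    ((E0 u t k).flip F).score (yp n k j) = if j ∈ GYF n k F then 0 else 1 := by
  rw [score_unit, flipA]
  have h : (yp n k j ∈ symmDiff (Finset.univ.filter fun c => isX c = false) (GF n k F))
      ↔ j ∉ GYF n k F := by
    simp [Finset.mem_symmDiff, GYF]; simp [yp, isX]
  by_cases hj : j ∈ GYF n k F <;> simp [h, hj]

lemma score_d (j : Fin (k + 1)) :
    ((E0 u t k).flip F).score (dp n k j) = if j ∈ GDF n k F then 0 else 1 := by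
  rw [score_unit, flipA]
  have h : (dp n k j ∈ symmDiff (Finset.univ.filter fun c => isX c = false) (GF n k F))
      ↔ j ∉ GDF n k F := by
    simp [Finset.mem_symmDiff, GDF]; simp [dp, isX]
  by_cases hj : j ∈ GDF n k F <;> simp [h, hj]

lemma score_p :
    ((E0 u t k).flip F).score (pProj n k) = if pProj n k ∈ GF n k F then 0 else 1 := by
  rw [score_unit, flipA]
  have h : (pProj n k ∈ symmDiff (Finset.univ.filter fun c => isX c = false) (GF n k F))
      ↔ pProj n k ∉ GF n k F := by
    simp [Finset.mem_symmDiff, pProj]; simp [isX]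
  by_cases hj : pProj n k ∈ GF n k F <;> simp [h, hj]

lemma score_le_one (c : Proj n k) : ((E0 u t k).flip F).score c ≤ 1 := by
  rw [score_unit]; split <;> omega

lemma rank0_lt (c : Proj n k) : rank0 n k c < n + 3 * k + 3 := by
  rcases c with ((i | j) | (j | v)) <;> simp [rank0] <;> omega

lemma rank0_inj : Function.Injective (rank0 n k) := by
  intro c c' h
  rcases c with ((i | j) | (j | v)) <;> rcases c' with ((i' | j') | (j' | v')) <;>
    simp only [rank0] at h
  case inl.inl.inl.inl => refine congrArg _ (congrArg _ (Fin.ext ?_)); omega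
  case inl.inr.inl.inr => refine congrArg _ (congrArg _ (Fin.ext ?_)); omega
  case inr.inl.inr.inl => refine congrArg _ (congrArg _ (Fin.ext ?_)); omega
  case inr.inr.inr.inr => exact congrArg _ (congrArg _ (Subsingleton.elim _ _))
  case inl.inl.inl.inr => exact absurd h (by have := i.isLt; omega)
  case inl.inl.inr.inl => exact absurd h (by have := i.isLt; omega)
  case inl.inl.inr.inr => exact absurd h (by have := i.isLt; omega)
  case inl.inr.inl.inl => exact absurd h (by have := i'.isLt; omega)
  case inl.inr.inr.inl => exact absurd h (by have := j.isLt; omega)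
  case inl.inr.inr.inr => exact absurd h (by have := j.isLt; omega)
  case inr.inl.inl.inl => exact absurd h (by have := i'.isLt; omega)
  case inr.inl.inl.inr => exact absurd h (by have := j'.isLt; omega)
  case inr.inl.inr.inr => exact absurd h (by have := j.isLt; omega)
  case inr.inr.inl.inl => exact absurd h (by have := i'.isLt; omega)
  case inr.inr.inl.inr => exact absurd h (by have := j'.isLt; omega)
  case inr.inr.inr.inl => exact absurd h (by have := j'.isLt; omega)

/-- key values -/
lemma key_x_in {i : Fin n} (h : i ∈ XF n k F) : keyF n k F u t (xp n k i) = i := by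
  unfold keyF
  rw [score_x, if_pos h]
  simp [rank0, xp]

lemma key_x_out {i : Fin n} (h : i ∉ XF n k F) :
    keyF n k F u t (xp n k i) = (n + 3 * k + 3) + i := by
  unfold keyF
  rw [score_x, if_neg h]
  simp [rank0, xp]

lemma key_y_in {j : Fin (2 * k + 1)} (h : j ∈ GYF n k F) :
    keyF n k F u t (yp n k j) = (n + 3 * k + 3) + (n + j) := by
  unfold keyF
  rw [score_y, if_pos h]
  simp [rank0, yp]

lemma key_y_out {j : Fin (2 * k + 1)} (h : j ∉ GYF n k F) :
    keyF n k F u t (yp n k j) = n + j := by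
  unfold keyF
  rw [score_y, if_neg h]
  simp [rank0, yp]

lemma key_d_in {j : Fin (k + 1)} (h : j ∈ GDF n k F) :
    keyF n k F u t (dp n k j) = (n + 3 * k + 3) + (n + (2 * k + 1) + j) := by
  unfold keyF
  rw [score_d, if_pos h]
  simp [rank0, dp]

lemma key_d_out {j : Fin (k + 1)} (h : j ∉ GDF n k F) :
    keyF n k F u t (dp n k j) = n + (2 * k + 1) + j := by
  unfold keyF
  rw [score_d, if_neg h]
  simp [rank0, dp]

lemma key_p_in (h : pProj n k ∈ GF n k F) :
    keyF n k F u t (pProj n k) = (n + 3 * k + 3) + (n + (2 * k + 1) + (k + 1)) := by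
  unfold keyF
  rw [score_p, if_pos h]
  simp [rank0, pProj]

lemma key_p_out (h : pProj n k ∉ GF n k F) :
    keyF n k F u t (pProj n k) = n + (2 * k + 1) + (k + 1) := by
  unfold keyF
  rw [score_p, if_neg h]
  simp [rank0, pProj]


lemma key_iff (a b : Proj n k) :
    (decide (((E0 u t k).flip F).score b < ((E0 u t k).flip F).score a) ||
      (decide (((E0 u t k).flip F).score a = ((E0 u t k).flip F).score b) &&
        ((fun c c' => decide (rank0 n k c < rank0 n k c')) a b || decide (a = b)))) = true
    ↔ keyF n k F u t a ≤ keyF n k F u t b := by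
  have h1 := score_le_one n k F u t a
  have h2 := score_le_one n k F u t b
  have h3 := rank0_lt n k a
  have h4 := rank0_lt n k b
  have hiff : a = b ↔ rank0 n k a = rank0 n k b :=
    ⟨fun h => h ▸ rfl, fun h => rank0_inj n k h⟩
  simp only [Bool.or_eq_true, Bool.and_eq_true, decide_eq_true_eq, keyF, hiff]
  rcases Nat.le_one_iff_eq_zero_or_eq_one.1 h1 with h | h <;>
    rcases Nat.le_one_iff_eq_zero_or_eq_one.1 h2 with h' | h' <;> rw [h, h'] <;> omega

lemma mem_LF (c : Proj n k) : c ∈ LF n k F := by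
  simp only [LF, List.mem_append]
  rcases c with ((i | j) | (j | v))
  · by_cases h : i ∈ XF n k F
    · exact Or.inl (by simp [seg1, xp, Finset.mem_sort, h])
    · refine Or.inr (Or.inr (Or.inr (Or.inr (Or.inl ?_))))
      simp [seg5, xp, Finset.mem_sort, h]
  · by_cases h : j ∈ GYF n k F
    · refine Or.inr (Or.inr (Or.inr (Or.inr (Or.inr (Or.inl ?_)))))
      simp [seg6, yp, Finset.mem_sort, h]
    · refine Or.inr (Or.inl ?_)
      simp [seg2, yp, Finset.mem_sort, h]
  · by_cases h : j ∈ GDF n k F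
    · refine Or.inr (Or.inr (Or.inr (Or.inr (Or.inr (Or.inr (Or.inl ?_))))))
      simp [seg7, dp, Finset.mem_sort, h]
    · refine Or.inr (Or.inr (Or.inl ?_))
      simp [seg3, dp, Finset.mem_sort, h]
  · cases v
    by_cases h : pProj n k ∈ GF n k F
    · refine Or.inr (Or.inr (Or.inr (Or.inr (Or.inr (Or.inr (Or.inr ?_))))))
      simp only [seg8, if_pos h, List.mem_singleton]
      rfl
    · refine Or.inr (Or.inr (Or.inr (Or.inl ?_)))
      simp only [seg4, if_neg h, List.mem_singleton]
      rfl

lemma sorted_LF : ((LF n k F).map (keyF n k F u t)).Pairwise (· < ·) := by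
  have hs1 : ((seg1 n k F).map (keyF n k F u t)).Pairwise (· < ·) := by
    rw [seg1, List.map_map, List.pairwise_map]
    refine List.Pairwise.imp_of_mem ?_ (Finset.sortedLT_sort _).pairwise
    intro a b ha hb hab
    rw [Function.comp_apply, Function.comp_apply, key_x_in n k F u t ((Finset.mem_sort _).1 ha),
      key_x_in n k F u t ((Finset.mem_sort _).1 hb)]
    exact hab
  have hb1 : ∀ v ∈ (seg1 n k F).map (keyF n k F u t), v < n := by
    intro v hv
    rw [seg1, List.map_map] at hv
    obtain ⟨a, ha, rfl⟩ := List.mem_map.1 hv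
    rw [Function.comp_apply, key_x_in n k F u t ((Finset.mem_sort _).1 ha)]
    exact a.isLt
  have hs2 : ((seg2 n k F).map (keyF n k F u t)).Pairwise (· < ·) := by
    rw [seg2, List.map_map, List.pairwise_map]
    refine List.Pairwise.imp_of_mem ?_ (Finset.sortedLT_sort _).pairwise
    intro a b ha hb hab
    have ha' := Finset.mem_compl.1 ((Finset.mem_sort _).1 ha)
    have hb' := Finset.mem_compl.1 ((Finset.mem_sort _).1 hb)
    rw [Function.comp_apply, Function.comp_apply, key_y_out n k F u t ha', key_y_out n k F u t hb']
    have : (a : ℕ) < b := hab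
    omega
  have hb2 : ∀ v ∈ (seg2 n k F).map (keyF n k F u t), n ≤ v ∧ v < n + (2 * k + 1) := by
    intro v hv
    rw [seg2, List.map_map] at hv
    obtain ⟨a, ha, rfl⟩ := List.mem_map.1 hv
    have ha' := Finset.mem_compl.1 ((Finset.mem_sort _).1 ha)
    rw [Function.comp_apply, key_y_out n k F u t ha']
    have := a.isLt
    omega
  have hs3 : ((seg3 n k F).map (keyF n k F u t)).Pairwise (· < ·) := by
    rw [seg3, List.map_map, List.pairwise_map]
    refine List.Pairwise.imp_of_mem ?_ (Finset.sortedLT_sort _).pairwise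
    intro a b ha hb hab
    have ha' := Finset.mem_compl.1 ((Finset.mem_sort _).1 ha)
    have hb' := Finset.mem_compl.1 ((Finset.mem_sort _).1 hb)
    rw [Function.comp_apply, Function.comp_apply, key_d_out n k F u t ha', key_d_out n k F u t hb']
    have : (a : ℕ) < b := hab
    omega
  have hb3 : ∀ v ∈ (seg3 n k F).map (keyF n k F u t),
      n + (2 * k + 1) ≤ v ∧ v < n + 3 * k + 2 := by
    intro v hv
    rw [seg3, List.map_map] at hv
    obtain ⟨a, ha, rfl⟩ := List.mem_map.1 hv
    have ha' := Finset.mem_compl.1 ((Finset.mem_sort _).1 ha)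
    rw [Function.comp_apply, key_d_out n k F u t ha']
    have := a.isLt
    omega
  have hs4 : ((seg4 n k F).map (keyF n k F u t)).Pairwise (· < ·) := by
    by_cases hp : pProj n k ∈ GF n k F <;> simp [seg4, hp]
  have hb4 : ∀ v ∈ (seg4 n k F).map (keyF n k F u t),
      n + 3 * k + 2 ≤ v ∧ v < n + 3 * k + 3 := by
    intro v hv
    by_cases hp : pProj n k ∈ GF n k F <;> simp [seg4, hp] at hv
    rw [hv, key_p_out n k F u t hp]
    omega
  have hs5 : ((seg5 n k F).map (keyF n k F u t)).Pairwise (· < ·) := by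
    rw [seg5, List.map_map, List.pairwise_map]
    refine List.Pairwise.imp_of_mem ?_ (Finset.sortedLT_sort _).pairwise
    intro a b ha hb hab
    have ha' := Finset.mem_compl.1 ((Finset.mem_sort _).1 ha)
    have hb' := Finset.mem_compl.1 ((Finset.mem_sort _).1 hb)
    rw [Function.comp_apply, Function.comp_apply, key_x_out n k F u t ha', key_x_out n k F u t hb']
    have : (a : ℕ) < b := hab
    omega
  have hb5 : ∀ v ∈ (seg5 n k F).map (keyF n k F u t),
      n + 3 * k + 3 ≤ v ∧ v < n + 3 * k + 3 + n := by
    intro v hv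
    rw [seg5, List.map_map] at hv
    obtain ⟨a, ha, rfl⟩ := List.mem_map.1 hv
    have ha' := Finset.mem_compl.1 ((Finset.mem_sort _).1 ha)
    rw [Function.comp_apply, key_x_out n k F u t ha']
    have := a.isLt
    omega
  have hs6 : ((seg6 n k F).map (keyF n k F u t)).Pairwise (· < ·) := by
    rw [seg6, List.map_map, List.pairwise_map]
    refine List.Pairwise.imp_of_mem ?_ (Finset.sortedLT_sort _).pairwise
    intro a b ha hb hab
    rw [Function.comp_apply, Function.comp_apply, key_y_in n k F u t ((Finset.mem_sort _).1 ha),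
      key_y_in n k F u t ((Finset.mem_sort _).1 hb)]
    have : (a : ℕ) < b := hab
    omega
  have hb6 : ∀ v ∈ (seg6 n k F).map (keyF n k F u t),
      n + 3 * k + 3 + n ≤ v ∧ v < n + 3 * k + 3 + (n + (2 * k + 1)) := by
    intro v hv
    rw [seg6, List.map_map] at hv
    obtain ⟨a, ha, rfl⟩ := List.mem_map.1 hv
    rw [Function.comp_apply, key_y_in n k F u t ((Finset.mem_sort _).1 ha)]
    have := a.isLt
    omega
  have hs7 : ((seg7 n k F).map (keyF n k F u t)).Pairwise (· < ·) := by
    rw [seg7, List.map_map, List.pairwise_map]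
    refine List.Pairwise.imp_of_mem ?_ (Finset.sortedLT_sort _).pairwise
    intro a b ha hb hab
    rw [Function.comp_apply, Function.comp_apply, key_d_in n k F u t ((Finset.mem_sort _).1 ha),
      key_d_in n k F u t ((Finset.mem_sort _).1 hb)]
    have : (a : ℕ) < b := hab
    omega
  have hb7 : ∀ v ∈ (seg7 n k F).map (keyF n k F u t),
      n + 3 * k + 3 + (n + (2 * k + 1)) ≤ v ∧ v < n + 3 * k + 3 + (n + 3 * k + 2) := by
    intro v hv
    rw [seg7, List.map_map] at hv
    obtain ⟨a, ha, rfl⟩ := List.mem_map.1 hv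
    rw [Function.comp_apply, key_d_in n k F u t ((Finset.mem_sort _).1 ha)]
    have := a.isLt
    omega
  have hs8 : ((seg8 n k F).map (keyF n k F u t)).Pairwise (· < ·) := by
    by_cases hp : pProj n k ∈ GF n k F <;> simp [seg8, hp]
  have hb8 : ∀ v ∈ (seg8 n k F).map (keyF n k F u t),
      n + 3 * k + 3 + (n + 3 * k + 2) ≤ v := by
    intro v hv
    by_cases hp : pProj n k ∈ GF n k F <;> simp [seg8, hp] at hv
    rw [hv, key_p_in n k F u t hp]
    omega
  -- assemble
  have h78 : (((seg7 n k F).map (keyF n k F u t)) ++ ((seg8 n k F).map (keyF n k F u t))).Pairwise (· < ·) :=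
    sorted_append_aux (n + 3 * k + 3 + (n + 3 * k + 2)) hs7 hs8
      (fun a ha => (hb7 a ha).2) hb8
  have hb78 : ∀ v ∈ ((seg7 n k F).map (keyF n k F u t)) ++ ((seg8 n k F).map (keyF n k F u t)),
      n + 3 * k + 3 + (n + (2 * k + 1)) ≤ v := by
    intro v hv
    rcases List.mem_append.1 hv with h | h
    · exact (hb7 v h).1
    · have := hb8 v h; omega
  have h678 := sorted_append_aux (n + 3 * k + 3 + (n + (2 * k + 1))) hs6 h78
    (fun a ha => (hb6 a ha).2) hb78
  have hb678 : ∀ v ∈ ((seg6 n k F).map (keyF n k F u t)) ++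
      (((seg7 n k F).map (keyF n k F u t)) ++ ((seg8 n k F).map (keyF n k F u t))),
      n + 3 * k + 3 + n ≤ v := by
    intro v hv
    rcases List.mem_append.1 hv with h | h
    · exact (hb6 v h).1
    · have := hb78 v h; omega
  have h5678 := sorted_append_aux (n + 3 * k + 3 + n) hs5 h678
    (fun a ha => (hb5 a ha).2) hb678
  have hb5678 : ∀ v ∈ ((seg5 n k F).map (keyF n k F u t)) ++
      (((seg6 n k F).map (keyF n k F u t)) ++
      (((seg7 n k F).map (keyF n k F u t)) ++ ((seg8 n k F).map (keyF n k F u t)))),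
      n + 3 * k + 3 ≤ v := by
    intro v hv
    rcases List.mem_append.1 hv with h | h
    · exact (hb5 v h).1
    · have := hb678 v h; omega
  have h45678 := sorted_append_aux (n + 3 * k + 3) hs4 h5678
    (fun a ha => (hb4 a ha).2) hb5678
  have hb45678 : ∀ v ∈ ((seg4 n k F).map (keyF n k F u t)) ++
      (((seg5 n k F).map (keyF n k F u t)) ++
      (((seg6 n k F).map (keyF n k F u t)) ++
      (((seg7 n k F).map (keyF n k F u t)) ++ ((seg8 n k F).map (keyF n k F u t))))),
      n + 3 * k + 2 ≤ v := by
    intro v hv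
    rcases List.mem_append.1 hv with h | h
    · exact (hb4 v h).1
    · have := hb5678 v h; omega
  have h345678 := sorted_append_aux (n + 3 * k + 2) hs3 h45678
    (fun a ha => (hb3 a ha).2) hb45678
  have hb345678 : ∀ v ∈ ((seg3 n k F).map (keyF n k F u t)) ++
      (((seg4 n k F).map (keyF n k F u t)) ++
      (((seg5 n k F).map (keyF n k F u t)) ++
      (((seg6 n k F).map (keyF n k F u t)) ++
      (((seg7 n k F).map (keyF n k F u t)) ++ ((seg8 n k F).map (keyF n k F u t)))))),
      n + (2 * k + 1) ≤ v := by
    intro v hv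
    rcases List.mem_append.1 hv with h | h
    · exact (hb3 v h).1
    · have := hb45678 v h; omega
  have h2345678 := sorted_append_aux (n + (2 * k + 1)) hs2 h345678
    (fun a ha => (hb2 a ha).2) hb345678
  have hb2345678 : ∀ v ∈ ((seg2 n k F).map (keyF n k F u t)) ++
      (((seg3 n k F).map (keyF n k F u t)) ++
      (((seg4 n k F).map (keyF n k F u t)) ++
      (((seg5 n k F).map (keyF n k F u t)) ++
      (((seg6 n k F).map (keyF n k F u t)) ++
      (((seg7 n k F).map (keyF n k F u t)) ++ ((seg8 n k F).map (keyF n k F u t))))))),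
      n ≤ v := by
    intro v hv
    rcases List.mem_append.1 hv with h | h
    · exact (hb2 v h).1
    · have := hb345678 v h; omega
  have hall := sorted_append_aux n hs1 h2345678 hb1 hb2345678
  simpa only [LF, List.map_append] using hall

lemma nodup_LF : (LF n k F).Nodup :=
  ((sorted_LF n k F (fun _ => 0) 0).nodup).of_map _

lemma order_LF : PB.consOrderAV ((E0 u t k).flip F)
    (fun c c' => decide (rank0 n k c < rank0 n k c')) = LF n k F :=
  PBaux.consOrderAV_eq _ _ (keyF n k F u t) (key_iff n k F u t) (LF n k F)
    (mem_LF n k F) (sorted_LF n k F u t)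


lemma xp_inj : Function.Injective (xp n k) := fun a b h => by
  simpa [xp, Sum.inl.injEq] using h

lemma yp_inj : Function.Injective (yp n k) := fun a b h => by
  simpa [yp, Sum.inl.injEq, Sum.inr.injEq] using h

lemma dp_inj : Function.Injective (dp n k) := fun a b h => by
  simpa [dp, Sum.inl.injEq, Sum.inr.injEq] using h

lemma card_bounds (hFk : F.card ≤ k) :
    (XF n k F).card + (GYF n k F).card ≤ k ∧ (XF n k F).card + (GDF n k F).card ≤ k := by
  classical
  have hsub : ((XF n k F).image (xp n k)) ∪ ((GYF n k F).image (yp n k)) ∪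
      ((GDF n k F).image (dp n k)) ⊆ GF n k F := by
    intro c hc
    simp only [Finset.mem_union, Finset.mem_image] at hc
    rcases hc with (⟨i, hi, rfl⟩ | ⟨j, hj, rfl⟩) | ⟨j, hj, rfl⟩
    · exact (Finset.mem_filter.1 hi).2
    · exact (Finset.mem_filter.1 hj).2
    · exact (Finset.mem_filter.1 hj).2
  have hd1 : Disjoint ((XF n k F).image (xp n k)) ((GYF n k F).image (yp n k)) := by
    rw [Finset.disjoint_left]
    intro c hc1 hc2
    obtain ⟨i, _, rfl⟩ := Finset.mem_image.1 hc1
    obtain ⟨j, _, hj⟩ := Finset.mem_image.1 hc2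
    simp [xp, yp] at hj
  have hd2 : Disjoint (((XF n k F).image (xp n k)) ∪ ((GYF n k F).image (yp n k)))
      ((GDF n k F).image (dp n k)) := by
    rw [Finset.disjoint_left]
    intro c hc1 hc2
    obtain ⟨j, _, rfl⟩ := Finset.mem_image.1 hc2
    rcases Finset.mem_union.1 hc1 with h | h
    · obtain ⟨i, _, hi⟩ := Finset.mem_image.1 h
      simp [xp, dp] at hi
    · obtain ⟨i, _, hi⟩ := Finset.mem_image.1 h
      simp [yp, dp] at hi
  have hcard : (XF n k F).card + (GYF n k F).card + (GDF n k F).card ≤ k := by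
    have h1 := Finset.card_le_card hsub
    rw [Finset.card_union_of_disjoint hd2, Finset.card_union_of_disjoint hd1,
      Finset.card_image_of_injective _ (xp_inj n k),
      Finset.card_image_of_injective _ (yp_inj n k),
      Finset.card_image_of_injective _ (dp_inj n k)] at h1
    have h2 : (GF n k F).card ≤ F.card := Finset.card_image_le
    omega
  omega

lemma sum_seg1_cost : ((seg1 n k F).map (cost0 u t k)).sum
    = (XF n k F).card * (3 * ∑ j, u j) + ∑ i ∈ XF n k F, u i := by
  rw [seg1, List.map_map, sum_sort_map]
  have h : ∀ i ∈ XF n k F, (cost0 u t k ∘ xp n k) i = (3 * ∑ j, u j) + u i := fun i _ => rfl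
  rw [Finset.sum_congr rfl h, Finset.sum_add_distrib, Finset.sum_const, smul_eq_mul]

lemma sum_map_yp (l : List (Fin (2 * k + 1))) :
    ((l.map (yp n k)).map (cost0 u t k)).sum = l.length * (3 * ∑ j, u j) := by
  rw [List.map_map]
  have h : (cost0 u t k ∘ yp n k) = fun _ => 3 * ∑ j, u j := rfl
  rw [h, List.map_const']
  simp [List.sum_replicate, smul_eq_mul, mul_comm]

lemma sum_map_dp (l : List (Fin (k + 1))) :
    ((l.map (dp n k)).map (cost0 u t k)).sum = l.length * ((3 * ∑ j, u j) - t + 1) := by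
  rw [List.map_map]
  have h : (cost0 u t k ∘ dp n k) = fun _ => (3 * ∑ j, u j) - t + 1 := rfl
  rw [h, List.map_const']
  simp [List.sum_replicate, smul_eq_mul, mul_comm]


/-- The selection after processing the first three (score-one) segments. -/
def W3F (u : Fin n → ℕ) (t : ℕ) : Finset (Proj n k) :=
  PBaux.gfold ((k+1) * (3 * ∑ j, u j)) (cost0 u t k) ∅
    (seg1 n k F ++ (seg2 n k F ++ seg3 n k F))

lemma gfold_seg123 (hu : ∀ i, 0 < u i) (ht : 0 < t) (htsum : t ≤ ∑ j, u j)
    (hFk : F.card ≤ k) :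
    (∑ i ∈ XF n k F, u i = 0 ∧
        ∑ x ∈ W3F n k F u t, cost0 u t k x = (k+1) * (3 * ∑ j, u j)) ∨
    (0 < ∑ i ∈ XF n k F, u i ∧ ∑ i ∈ XF n k F, u i < t ∧
        ∑ x ∈ W3F n k F u t, cost0 u t k x
          = k * (3 * ∑ j, u j) + ∑ i ∈ XF n k F, u i + ((3 * ∑ j, u j) - t + 1)) ∨
    (0 < ∑ i ∈ XF n k F, u i ∧ t ≤ ∑ i ∈ XF n k F, u i ∧
        ∑ x ∈ W3F n k F u t, cost0 u t k x
          = k * (3 * ∑ j, u j) + ∑ i ∈ XF n k F, u i) := by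
  classical
  obtain ⟨hbnd1, hbnd2⟩ := card_bounds n k F hFk
  have hSupos : 0 < ∑ j, u j := lt_of_lt_of_le ht htsum
  have hsle : ∑ i ∈ XF n k F, u i ≤ ∑ j, u j :=
    Finset.sum_le_sum_of_subset (Finset.subset_univ _)
  have hak : (XF n k F).card ≤ k := by omega
  have hBeq : (k+1) * (3 * ∑ j, u j) = k * (3 * ∑ j, u j) + 3 * ∑ j, u j := by ring
  have hmulk : (XF n k F).card * (3 * ∑ j, u j) ≤ k * (3 * ∑ j, u j) :=
    Nat.mul_le_mul_right _ hak
  -- step 1 : all of seg1 fits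
  have hnd1 : (seg1 n k F).Nodup := (Finset.sort_nodup _ _).map (xp_inj n k)
  have hfit1 : (∑ x ∈ (∅ : Finset (Proj n k)), cost0 u t k x) +
      ((seg1 n k F).map (cost0 u t k)).sum ≤ (k+1) * (3 * ∑ j, u j) := by
    rw [Finset.sum_empty, sum_seg1_cost]
    omega
  obtain ⟨heq1, hsum1⟩ := PBaux.gfold_all _ _ (seg1 n k F) ∅ hnd1
    (fun c _ => Finset.notMem_empty c) hfit1
  rw [Finset.sum_empty, sum_seg1_cost, Nat.zero_add] at hsum1
  have hW3 : W3F n k F u t = PBaux.gfold ((k+1) * (3 * ∑ j, u j)) (cost0 u t k)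
      (PBaux.gfold ((k+1) * (3 * ∑ j, u j)) (cost0 u t k) ∅ (seg1 n k F))
      (seg2 n k F ++ seg3 n k F) := by
    rw [W3F, PBaux.gfold_append]
  set W1 := PBaux.gfold ((k+1) * (3 * ∑ j, u j)) (cost0 u t k) ∅ (seg1 n k F) with hW1def
  have hyW1 : ∀ j : Fin (2 * k + 1), yp n k j ∉ W1 := by
    rw [heq1]
    intro j
    simp [seg1, xp, yp]
  have hdW1 : ∀ j : Fin (k + 1), dp n k j ∉ W1 := by
    rw [heq1]
    intro j
    simp [seg1, xp, dp]
  -- seg2 splitting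
  obtain ⟨l2, hl2⟩ : ∃ l, ((GYF n k F)ᶜ).sort (· ≤ ·) = l := ⟨_, rfl⟩
  have hl2len : l2.length = (2 * k + 1) - (GYF n k F).card := by
    rw [← hl2, Finset.length_sort, Finset.card_compl]
    simp
  have hl2nd : l2.Nodup := by rw [← hl2]; exact Finset.sort_nodup _ _
  obtain ⟨l3, hl3⟩ : ∃ l, ((GDF n k F)ᶜ).sort (· ≤ ·) = l := ⟨_, rfl⟩
  have hl3len : l3.length = (k + 1) - (GDF n k F).card := by
    rw [← hl3, Finset.length_sort, Finset.card_compl]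
    simp
  have hl3nd : l3.Nodup := by rw [← hl3]; exact Finset.sort_nodup _ _
  have hseg3eq : seg3 n k F = l3.map (dp n k) := by rw [seg3, hl3]
  rcases Nat.eq_zero_or_pos (∑ i ∈ XF n k F, u i) with hs0 | hspos
  · -- case s = 0 : XF empty
    left
    refine ⟨hs0, ?_⟩
    have hXemp : XF n k F = ∅ := by
      rw [Finset.eq_empty_iff_forall_notMem]
      intro i hi
      have h1 : u i ≤ ∑ i ∈ XF n k F, u i :=
        Finset.single_le_sum (fun _ _ => Nat.zero_le _) hi
      have := hu i
      omega
    have ha0 : (XF n k F).card = 0 := by rw [hXemp]; rfl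
    rw [ha0, hs0] at hsum1
    simp only [Nat.zero_mul, Nat.add_zero] at hsum1
    have hq : k + 1 ≤ l2.length := by omega
    have hseg2 : seg2 n k F =
        (l2.take (k+1)).map (yp n k) ++ (l2.drop (k+1)).map (yp n k) := by
      rw [seg2, hl2, ← List.map_append, List.take_append_drop]
    rw [hseg2, List.append_assoc, PBaux.gfold_append] at hW3
    have hndt : ((l2.take (k+1)).map (yp n k)).Nodup :=
      ((List.take_sublist _ _).nodup hl2nd).map (yp_inj n k)
    have hsumtake : (((l2.take (k+1)).map (yp n k)).map (cost0 u t k)).sum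
        = (k+1) * (3 * ∑ j, u j) := by
      rw [sum_map_yp, List.length_take]
      congr 1
      omega
    have hfit2 : (∑ x ∈ W1, cost0 u t k x) +
        (((l2.take (k+1)).map (yp n k)).map (cost0 u t k)).sum ≤ (k+1) * (3 * ∑ j, u j) := by
      rw [hsumtake, hsum1]
      omega
    obtain ⟨heq2, hsum2⟩ := PBaux.gfold_all _ _ ((l2.take (k+1)).map (yp n k)) W1 hndt
      (by
        intro c hc
        obtain ⟨j, _, rfl⟩ := List.mem_map.1 hc
        exact hyW1 j) hfit2
    set W2 := PBaux.gfold ((k+1) * (3 * ∑ j, u j)) (cost0 u t k) W1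
      ((l2.take (k+1)).map (yp n k)) with hW2def
    rw [hsumtake, hsum1, Nat.zero_add] at hsum2
    rw [PBaux.gfold_append] at hW3
    have hnone2 : PBaux.gfold ((k+1) * (3 * ∑ j, u j)) (cost0 u t k) W2
        ((l2.drop (k+1)).map (yp n k)) = W2 := by
      apply PBaux.gfold_none
      intro c hc
      obtain ⟨j, _, rfl⟩ := List.mem_map.1 hc
      have hcost : cost0 u t k (yp n k j) = 3 * ∑ j, u j := rfl
      rw [hcost, hsum2]
      omega
    rw [hnone2] at hW3
    have hnone3 : PBaux.gfold ((k+1) * (3 * ∑ j, u j)) (cost0 u t k) W2 (seg3 n k F) = W2 := by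
      apply PBaux.gfold_none
      intro c hc
      rw [hseg3eq] at hc
      obtain ⟨j, _, rfl⟩ := List.mem_map.1 hc
      have hcost : cost0 u t k (dp n k j) = (3 * ∑ j, u j) - t + 1 := rfl
      rw [hcost, hsum2]
      omega
    rw [hnone3] at hW3
    rw [hW3, hsum2]
  · -- case s > 0
    have hXne : (XF n k F).card ≠ 0 := by
      intro h0
      rw [Finset.card_eq_zero.1 h0] at hspos
      simp at hspos
    have haT : (XF n k F).card * (3 * ∑ j, u j) +
        (k - (XF n k F).card) * (3 * ∑ j, u j) = k * (3 * ∑ j, u j) := by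
      rw [← Nat.add_mul]
      congr 1
      omega
    have hq : k - (XF n k F).card ≤ l2.length := by omega
    have hseg2 : seg2 n k F =
        (l2.take (k - (XF n k F).card)).map (yp n k) ++
        (l2.drop (k - (XF n k F).card)).map (yp n k) := by
      rw [seg2, hl2, ← List.map_append, List.take_append_drop]
    rw [hseg2, List.append_assoc, PBaux.gfold_append] at hW3
    have hndt : ((l2.take (k - (XF n k F).card)).map (yp n k)).Nodup :=
      ((List.take_sublist _ _).nodup hl2nd).map (yp_inj n k)
    have hsumtake : (((l2.take (k - (XF n k F).card)).map (yp n k)).map (cost0 u t k)).sum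
        = (k - (XF n k F).card) * (3 * ∑ j, u j) := by
      rw [sum_map_yp, List.length_take]
      congr 1
      omega
    have hfit2 : (∑ x ∈ W1, cost0 u t k x) +
        (((l2.take (k - (XF n k F).card)).map (yp n k)).map (cost0 u t k)).sum
          ≤ (k+1) * (3 * ∑ j, u j) := by
      rw [hsumtake, hsum1]
      omega
    obtain ⟨heq2, hsum2⟩ := PBaux.gfold_all _ _
      ((l2.take (k - (XF n k F).card)).map (yp n k)) W1 hndt
      (by
        intro c hc
        obtain ⟨j, _, rfl⟩ := List.mem_map.1 hc
        exact hyW1 j) hfit2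
    set W2 := PBaux.gfold ((k+1) * (3 * ∑ j, u j)) (cost0 u t k) W1
      ((l2.take (k - (XF n k F).card)).map (yp n k)) with hW2def
    rw [hsumtake, hsum1] at hsum2
    have hsum2' : ∑ x ∈ W2, cost0 u t k x
        = k * (3 * ∑ j, u j) + ∑ i ∈ XF n k F, u i := by
      rw [hsum2]
      omega
    rw [PBaux.gfold_append] at hW3
    have hnone2 : PBaux.gfold ((k+1) * (3 * ∑ j, u j)) (cost0 u t k) W2
        ((l2.drop (k - (XF n k F).card)).map (yp n k)) = W2 := by
      apply PBaux.gfold_none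
      intro c hc
      obtain ⟨j, _, rfl⟩ := List.mem_map.1 hc
      have hcost : cost0 u t k (yp n k j) = 3 * ∑ j, u j := rfl
      rw [hcost, hsum2']
      omega
    rw [hnone2] at hW3
    have hdW2 : ∀ j : Fin (k + 1), dp n k j ∉ W2 := by
      intro j
      rw [heq2]
      simp only [Finset.mem_union, not_or]
      refine ⟨hdW1 j, fun hmem => ?_⟩
      rw [List.mem_toFinset] at hmem
      obtain ⟨j', _, hj'⟩ := List.mem_map.1 hmem
      simp [dp, yp] at hj' 
    rcases lt_or_ge (∑ i ∈ XF n k F, u i) t with hst | hst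
    · -- 0 < s < t : exactly one dummy project fits
      right; left
      refine ⟨hspos, hst, ?_⟩
      have hl3pos : 1 ≤ l3.length := by omega
      have hseg3 : seg3 n k F =
          (l3.take 1).map (dp n k) ++ (l3.drop 1).map (dp n k) := by
        rw [hseg3eq, ← List.map_append, List.take_append_drop]
      rw [hseg3, PBaux.gfold_append] at hW3
      have hndt3 : ((l3.take 1).map (dp n k)).Nodup :=
        ((List.take_sublist _ _).nodup hl3nd).map (dp_inj n k)
      have hsumtake3 : (((l3.take 1).map (dp n k)).map (cost0 u t k)).sum
          = (3 * ∑ j, u j) - t + 1 := by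
        rw [sum_map_dp, List.length_take]
        have h1 : min 1 l3.length = 1 := by omega
        rw [h1, Nat.one_mul]
      have hfit3 : (∑ x ∈ W2, cost0 u t k x) +
          (((l3.take 1).map (dp n k)).map (cost0 u t k)).sum ≤ (k+1) * (3 * ∑ j, u j) := by
        rw [hsumtake3, hsum2']
        omega
      obtain ⟨heq3, hsum3⟩ := PBaux.gfold_all _ _ ((l3.take 1).map (dp n k)) W2 hndt3
        (by
          intro c hc
          obtain ⟨j, _, rfl⟩ := List.mem_map.1 hc
          exact hdW2 j) hfit3
      set W3' := PBaux.gfold ((k+1) * (3 * ∑ j, u j)) (cost0 u t k) W2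
        ((l3.take 1).map (dp n k)) with hW3'def
      rw [hsumtake3, hsum2'] at hsum3
      have hnone3 : PBaux.gfold ((k+1) * (3 * ∑ j, u j)) (cost0 u t k) W3'
          ((l3.drop 1).map (dp n k)) = W3' := by
        apply PBaux.gfold_none
        intro c hc
        obtain ⟨j, _, rfl⟩ := List.mem_map.1 hc
        have hcost : cost0 u t k (dp n k j) = (3 * ∑ j, u j) - t + 1 := rfl
        rw [hcost, hsum3]
        omega
      rw [hnone3] at hW3
      rw [hW3, hsum3]
    · -- t ≤ s : no dummy project fits
      right; right
      refine ⟨hspos, hst, ?_⟩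
      have hnone3 : PBaux.gfold ((k+1) * (3 * ∑ j, u j)) (cost0 u t k) W2 (seg3 n k F) = W2 := by
        apply PBaux.gfold_none
        intro c hc
        rw [hseg3eq] at hc
        obtain ⟨j, _, rfl⟩ := List.mem_map.1 hc
        have hcost : cost0 u t k (dp n k j) = (3 * ∑ j, u j) - t + 1 := rfl
        rw [hcost, hsum2']
        omega
      rw [hnone3] at hW3
      rw [hW3, hsum2']

end PBred

theorem stmt0 (n k t : ℕ) (u : Fin n → ℕ) (hu : ∀ i, 0 < u i)
    (ht : 0 < t) (hk : 0 < k) (htsum : t ≤ ∑ i, u i)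
    (hsize : ∀ S : Finset (Fin n), ∑ i ∈ S, u i = t → S.card = k) :
    (∃ F : Finset (Unit × Proj n k), F.card ≤ k ∧
        pProj n k ∈ PB.greedyAV ((E0 u t k).flip F)
          (fun c c' => decide (rank0 n k c < rank0 n k c'))) ↔
      ∃ S : Finset (Fin n), S.card = k ∧ ∑ i ∈ S, u i = t := by
  classical
  have hSupos : 0 < ∑ j, u j := lt_of_lt_of_le ht htsum
  constructor
  · rintro ⟨F, hFk, hp⟩
    have hgreedy : PB.greedyAV ((E0 u t k).flip F)
        (fun c c' => decide (rank0 n k c < rank0 n k c'))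
        = PBaux.gfold ((k+1) * (3 * ∑ j, u j)) (cost0 u t k) ∅ (PBred.LF n k F) := by
      rw [PB.greedyAV, PBred.order_LF n k F u t]
      rfl
    rw [hgreedy] at hp
    have hLFsplit : PBred.LF n k F =
        (PBred.seg1 n k F ++ (PBred.seg2 n k F ++ PBred.seg3 n k F)) ++
        (PBred.seg4 n k F ++ (PBred.seg5 n k F ++ (PBred.seg6 n k F ++
          (PBred.seg7 n k F ++ PBred.seg8 n k F)))) := by
      rw [PBred.LF]
      simp [List.append_assoc]
    rw [hLFsplit, PBaux.gfold_append] at hp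
    have hpnotL : pProj n k ∉ (PBred.seg1 n k F ++ (PBred.seg2 n k F ++ PBred.seg3 n k F)) := by
      simp [PBred.seg1, PBred.seg2, PBred.seg3, PBred.xp, PBred.yp, PBred.dp, pProj]
    have hpnot : pProj n k ∉ PBred.W3F n k F u t := by
      intro hmem
      have hsub := PBaux.gfold_subset ((k+1) * (3 * ∑ j, u j)) (cost0 u t k)
        (PBred.seg1 n k F ++ (PBred.seg2 n k F ++ PBred.seg3 n k F)) ∅ hmem
      rw [Finset.empty_union, List.mem_toFinset] at hsub
      exact hpnotL hsub
    obtain ⟨W', hsub', hle⟩ := PBaux.gfold_mem_le _ _ _ _ _ hpnot hp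
    have hWle : ∑ x ∈ PBred.W3F n k F u t, cost0 u t k x ≤ ∑ x ∈ W', cost0 u t k x :=
      Finset.sum_le_sum_of_subset hsub'
    have hcostp : cost0 u t k (pProj n k) = (3 * ∑ j, u j) - t := rfl
    rw [hcostp] at hle
    have hBeq : (k+1) * (3 * ∑ j, u j) = k * (3 * ∑ j, u j) + 3 * ∑ j, u j := by ring
    rcases PBred.gfold_seg123 n k F u t hu ht htsum hFk with
      ⟨hs0, hsum⟩ | ⟨h1, h2, hsum⟩ | ⟨h1, h2, hsum⟩
    · omega
    · omega
    · rcases eq_or_lt_of_le h2 with heq | hlt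
      · exact ⟨PBred.XF n k F, hsize _ heq.symm, heq.symm⟩
      · omega
  · rintro ⟨S, hScard, hSsum⟩
    refine ⟨S.image (fun i => ((), PBred.xp n k i)), ?_, ?_⟩
    · have hinj : Function.Injective (fun i : Fin n => ((), PBred.xp n k i)) := by
        intro a b hab
        simp only [Prod.mk.injEq] at hab
        exact PBred.xp_inj n k hab.2
      rw [Finset.card_image_of_injective _ hinj, hScard]
    · set F := S.image (fun i => ((), PBred.xp n k i)) with hFdef
      have hFcard : F.card ≤ k := by
        have hinj : Function.Injective (fun i : Fin n => ((), PBred.xp n k i)) := by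
          intro a b hab
          simp only [Prod.mk.injEq] at hab
          exact PBred.xp_inj n k hab.2
        rw [hFdef, Finset.card_image_of_injective _ hinj, hScard]
      have hGF : PBred.GF n k F = S.image (PBred.xp n k) := by
        rw [PBred.GF, hFdef, Finset.image_image]
        rfl
      have hXF : PBred.XF n k F = S := by
        ext i
        simp [PBred.XF, hGF, PBred.xp]
      have hpG : pProj n k ∉ PBred.GF n k F := by
        rw [hGF]
        simp [pProj, PBred.xp]
      have hgreedy : PB.greedyAV ((E0 u t k).flip F)
          (fun c c' => decide (rank0 n k c < rank0 n k c'))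
          = PBaux.gfold ((k+1) * (3 * ∑ j, u j)) (cost0 u t k) ∅ (PBred.LF n k F) := by
        rw [PB.greedyAV, PBred.order_LF n k F u t]
        rfl
      rw [hgreedy]
      have hLFsplit : PBred.LF n k F =
          (PBred.seg1 n k F ++ (PBred.seg2 n k F ++ PBred.seg3 n k F)) ++
          (PBred.seg4 n k F ++ (PBred.seg5 n k F ++ (PBred.seg6 n k F ++
            (PBred.seg7 n k F ++ PBred.seg8 n k F)))) := by
        rw [PBred.LF]
        simp [List.append_assoc]
      rw [hLFsplit, PBaux.gfold_append]
      have hsum3 : ∑ x ∈ PBred.W3F n k F u t, cost0 u t k x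
          = k * (3 * ∑ j, u j) + t := by
        rcases PBred.gfold_seg123 n k F u t hu ht htsum hFcard with
          ⟨hs0, hsum⟩ | ⟨h1, h2, hsum⟩ | ⟨h1, h2, hsum⟩
        · rw [hXF, hSsum] at hs0
          omega
        · rw [hXF, hSsum] at h2
          omega
        · rw [hXF, hSsum] at hsum
          exact hsum
      have hseg4 : PBred.seg4 n k F = [pProj n k] := by
        rw [PBred.seg4, if_neg hpG]
      rw [hseg4]
      have hstep : PBaux.gfold ((k+1) * (3 * ∑ j, u j)) (cost0 u t k)
          (PBred.W3F n k F u t)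
          ([pProj n k] ++ (PBred.seg5 n k F ++ (PBred.seg6 n k F ++
            (PBred.seg7 n k F ++ PBred.seg8 n k F))))
          = PBaux.gfold ((k+1) * (3 * ∑ j, u j)) (cost0 u t k)
            (insert (pProj n k) (PBred.W3F n k F u t))
            (PBred.seg5 n k F ++ (PBred.seg6 n k F ++
              (PBred.seg7 n k F ++ PBred.seg8 n k F))) := by
        rw [List.singleton_append, PBaux.gfold_cons, if_pos]
        have hcostp : cost0 u t k (pProj n k) = (3 * ∑ j, u j) - t := rfl
        rw [hcostp, hsum3]
        have hBeq : (k+1) * (3 * ∑ j, u j) = k * (3 * ∑ j, u j) + 3 * ∑ j, u j := by ring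
        omega
      rw [show PBaux.gfold ((k+1) * (3 * ∑ j, u j)) (cost0 u t k) ∅
          (PBred.seg1 n k F ++ (PBred.seg2 n k F ++ PBred.seg3 n k F))
          = PBred.W3F n k F u t from rfl]
      rw [hstep]
      exact PBaux.subset_gfold _ _ _ _ (Finset.mem_insert_self _ _)
end

section
/- Let u_1, …, u_n be positive integers and let t and k be positive integers with 0 < t ≤ u_1 + … + u_n. Set T = 3·(u_1 + … + u_n). Let E be the PB instance with projects C = {x_1,…,x_n} ∪ {y_1,…,y_{2k+1}} ∪ {d_1,…,d_{k+1}} ∪ {p}, costs cost(x_i) = T + u_i, cost(y_j) = T, cost(d_j) = T − t + 1, cost(p) = T − t, a single voter who approves exactly the projects in C ∖ {x_1,…,x_n}, budget B = (k+1)T, and GreedyAV run with the tie-breaking order x_1 ≻ … ≻ x_n ≻ y_1 ≻ … ≻ y_{2k+1} ≻ d_1 ≻ … ≻ d_{k+1} ≻ p. For any X' ⊆ {x_1,…,x_n} and any R ⊆ {y_1,…,y_{2k+1}} ∪ {d_1,…,d_{k+1}} with |X'| + |R| ≤ k, let E' be obtained from E by adding the voter's approval of every project in X' and removing the voter's approval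 of every project in R. Then p ∈ GreedyAV(E') if and only if Σ_{i : x_i ∈ X'} u_i = t. -/
/-- Is a project one of the `y_j`? -/
def isY {n k : ℕ} : Proj n k → Prop := fun c => ∃ j, c = Sum.inl (Sum.inr j)

/-- Is a project one of the `d_j`? -/
def isD {n k : ℕ} : Proj n k → Prop := fun c => ∃ j, c = Sum.inr (Sum.inl j)


namespace S1

def xP (n k : ℕ) (i : Fin n) : Proj n k := Sum.inl (Sum.inl i)
def yP (n k : ℕ) (j : Fin (2*k+1)) : Proj n k := Sum.inl (Sum.inr j)
def dP (n k : ℕ) (j : Fin (k+1)) : Proj n k := Sum.inr (Sum.inl j)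

lemma rank0_lt {n k : ℕ} (c : Proj n k) : rank0 n k c < n + 3*k + 3 := by
  rcases c with (i | j) | (j | _) <;> simp only [rank0] <;>
    first
    | (have := i.isLt; omega)
    | (have := j.isLt; omega)
    | omega

lemma rank0_inj {n k : ℕ} : Function.Injective (rank0 n k) := by
  rintro ((i | i) | (i | ⟨⟩)) ((j | j) | (j | ⟨⟩)) h <;>
    simp only [rank0] at h <;>
    first
    | rfl
    | · simp only [Sum.inl.injEq, Sum.inr.injEq, Fin.ext_iff]
        omega
    | · exfalso
        first
        | (have hi := i.isLt; have hj := j.isLt; omega)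
        | (have hi := i.isLt; omega)
        | (have hj := j.isLt; omega)

lemma score_unit {C : Type} [Fintype C] [DecidableEq C] (E : PB C Unit) (c : C) :
    E.score c = if c ∈ E.A () then 1 else 0 := by
  classical
  simp only [PB.score]
  rcases Finset.univ_unique (α := Unit) with _
  split
  · rw [Finset.filter_true_of_mem (by intro v _; cases v; assumption)]
    simp
  · rw [Finset.filter_false_of_mem (by intro v _; cases v; assumption)]
    simp

section Main
variable (n k : ℕ) (S : Finset (Fin n)) (R : Finset (Proj n k))

def Aset : Finset (Proj n k) :=
  ((Finset.univ.filter fun c => isX c = false) ∪ S.image (xP n k)) \ R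

variable {n k S R}

lemma mem_Aset_x (hR : ∀ c ∈ R, isY c ∨ isD c) (i : Fin n) :
    xP n k i ∈ Aset n k S R ↔ i ∈ S := by
  have hnotR : xP n k i ∉ R := by
    intro h
    rcases hR _ h with ⟨j, hj⟩ | ⟨j, hj⟩ <;> simp [xP] at hj
  simp only [Aset, Finset.mem_sdiff, Finset.mem_union, Finset.mem_filter, Finset.mem_univ,
    Finset.mem_image, hnotR, not_false_iff, and_true, true_and]
  constructor
  · rintro (h | ⟨j, hj, he⟩)
    · simp [xP, isX] at h
    · cases (by simpa [xP, Sum.inl.injEq] using he : j = i); exact hj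
  · intro h; exact Or.inr ⟨i, h, rfl⟩

lemma mem_Aset_y (j : Fin (2*k+1)) : yP n k j ∈ Aset n k S R ↔ yP n k j ∉ R := by
  simp [Aset, yP, isX]
  intro _
  exact Or.inl (Finset.mem_filter.mpr ⟨Finset.mem_univ _, rfl⟩)

lemma mem_Aset_d (j : Fin (k+1)) : dP n k j ∈ Aset n k S R ↔ dP n k j ∉ R := by
  simp [Aset, dP, isX]
  intro _
  exact Or.inl (Finset.mem_filter.mpr ⟨Finset.mem_univ _, rfl⟩)

lemma mem_Aset_p (hR : ∀ c ∈ R, isY c ∨ isD c) : pProj n k ∈ Aset n k S R := by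
  have hnotR : pProj n k ∉ R := by
    intro h
    rcases hR _ h with ⟨j, hj⟩ | ⟨j, hj⟩ <;> simp [pProj] at hj
  simp only [pProj] at hnotR ⊢
  simp [Aset, isX, hnotR]
  exact Or.inl (Finset.mem_filter.mpr ⟨Finset.mem_univ _, rfl⟩)

variable (n k S R) in
def kappa : Proj n k → ℕ := fun c => (if c ∈ Aset n k S R then 0 else n + 3*k + 3) + rank0 n k c

lemma kappa_inj : Function.Injective (kappa n k S R) := by
  intro a b h
  have ha := rank0_lt a
  have hb := rank0_lt b
  apply rank0_inj (n := n) (k := k)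
  simp only [kappa] at h
  split at h <;> split at h <;> omega

lemma kappa_x (hR : ∀ c ∈ R, isY c ∨ isD c) (i : Fin n) :
    kappa n k S R (xP n k i) = (if i ∈ S then 0 else n + 3*k + 3) + (i : ℕ) := by
  simp only [kappa, mem_Aset_x hR]
  rfl

lemma kappa_y (j : Fin (2*k+1)) :
    kappa n k S R (yP n k j) = (if yP n k j ∈ R then n + 3*k + 3 else 0) + (n + (j : ℕ)) := by
  have hr : rank0 n k (yP n k j) = n + (j : ℕ) := rfl
  by_cases h : yP n k j ∈ R <;> simp [kappa, mem_Aset_y, h, hr]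

lemma kappa_d (j : Fin (k+1)) :
    kappa n k S R (dP n k j) =
      (if dP n k j ∈ R then n + 3*k + 3 else 0) + (n + (2*k+1) + (j : ℕ)) := by
  have hr : rank0 n k (dP n k j) = n + (2*k+1) + (j : ℕ) := rfl
  by_cases h : dP n k j ∈ R <;> simp [kappa, mem_Aset_d, h, hr]

lemma kappa_p (hR : ∀ c ∈ R, isY c ∨ isD c) :
    kappa n k S R (pProj n k) = n + 3*k + 2 := by
  simp only [kappa, if_pos (mem_Aset_p hR), zero_add]
  show n + (2*k+1) + (k+1) = n + 3*k + 2
  omega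

variable (n k R) in
def kYs : Finset (Fin (2*k+1)) := Finset.univ.filter fun j => yP n k j ∉ R
variable (n k R) in
def rYs : Finset (Fin (2*k+1)) := Finset.univ.filter fun j => yP n k j ∈ R
variable (n k R) in
def kDs : Finset (Fin (k+1)) := Finset.univ.filter fun j => dP n k j ∉ R
variable (n k R) in
def rDs : Finset (Fin (k+1)) := Finset.univ.filter fun j => dP n k j ∈ R

variable (n k S R) in
def bigL : List (Proj n k) :=
  ((S.sort (·≤·)).map (xP n k)) ++
    (((kYs n k R).sort (·≤·)).map (yP n k) ++
      (((kDs n k R).sort (·≤·)).map (dP n k) ++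
        (pProj n k ::
          ((Sᶜ.sort (·≤·)).map (xP n k) ++
            (((rYs n k R).sort (·≤·)).map (yP n k) ++
              ((rDs n k R).sort (·≤·)).map (dP n k))))))

lemma xP_inj : Function.Injective (xP n k) := fun a b h => by
  simpa [xP] using h

lemma yP_inj : Function.Injective (yP n k) := fun a b h => by
  simpa [yP] using h

lemma dP_inj : Function.Injective (dP n k) := fun a b h => by
  simpa [dP] using h

lemma bigL_pairwise (hR : ∀ c ∈ R, isY c ∨ isD c) :
    (bigL n k S R).Pairwise fun a b => kappa n k S R a < kappa n k S R b := by
  -- block membership характеristics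
  have hm1 : ∀ c ∈ (S.sort (·≤·)).map (xP n k), ∃ i, i ∈ S ∧ c = xP n k i := by
    intro c hc
    rcases List.mem_map.mp hc with ⟨i, hi, rfl⟩
    exact ⟨i, (Finset.mem_sort _).mp hi, rfl⟩
  have hm2 : ∀ c ∈ ((kYs n k R).sort (·≤·)).map (yP n k),
      ∃ j, yP n k j ∉ R ∧ c = yP n k j := by
    intro c hc
    rcases List.mem_map.mp hc with ⟨j, hj, rfl⟩
    have := (Finset.mem_sort _).mp hj
    simp only [kYs, Finset.mem_filter] at this
    exact ⟨j, this.2, rfl⟩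
  have hm3 : ∀ c ∈ ((kDs n k R).sort (·≤·)).map (dP n k),
      ∃ j, dP n k j ∉ R ∧ c = dP n k j := by
    intro c hc
    rcases List.mem_map.mp hc with ⟨j, hj, rfl⟩
    have := (Finset.mem_sort _).mp hj
    simp only [kDs, Finset.mem_filter] at this
    exact ⟨j, this.2, rfl⟩
  have hm5 : ∀ c ∈ (Sᶜ.sort (·≤·)).map (xP n k), ∃ i, i ∉ S ∧ c = xP n k i := by
    intro c hc
    rcases List.mem_map.mp hc with ⟨i, hi, rfl⟩
    have := (Finset.mem_sort _).mp hi
    exact ⟨i, by simpa using this, rfl⟩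
  have hm6 : ∀ c ∈ ((rYs n k R).sort (·≤·)).map (yP n k),
      ∃ j, yP n k j ∈ R ∧ c = yP n k j := by
    intro c hc
    rcases List.mem_map.mp hc with ⟨j, hj, rfl⟩
    have := (Finset.mem_sort _).mp hj
    simp only [rYs, Finset.mem_filter] at this
    exact ⟨j, this.2, rfl⟩
  have hm7 : ∀ c ∈ ((rDs n k R).sort (·≤·)).map (dP n k),
      ∃ j, dP n k j ∈ R ∧ c = dP n k j := by
    intro c hc
    rcases List.mem_map.mp hc with ⟨j, hj, rfl⟩
    have := (Finset.mem_sort _).mp hj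
    simp only [rDs, Finset.mem_filter] at this
    exact ⟨j, this.2, rfl⟩
  -- bounds
  have hb1 : ∀ c ∈ (S.sort (·≤·)).map (xP n k), kappa n k S R c < n := by
    intro c hc
    rcases hm1 c hc with ⟨i, hi, rfl⟩
    rw [kappa_x hR, if_pos hi, zero_add]
    exact i.isLt
  have hb2 : ∀ c ∈ ((kYs n k R).sort (·≤·)).map (yP n k),
      n ≤ kappa n k S R c ∧ kappa n k S R c < n + (2*k+1) := by
    intro c hc
    rcases hm2 c hc with ⟨j, hj, rfl⟩
    rw [kappa_y, if_neg hj, zero_add]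
    have := j.isLt
    omega
  have hb3 : ∀ c ∈ ((kDs n k R).sort (·≤·)).map (dP n k),
      n + (2*k+1) ≤ kappa n k S R c ∧ kappa n k S R c < n + 3*k + 2 := by
    intro c hc
    rcases hm3 c hc with ⟨j, hj, rfl⟩
    rw [kappa_d, if_neg hj, zero_add]
    have := j.isLt
    omega
  have hb5 : ∀ c ∈ (Sᶜ.sort (·≤·)).map (xP n k),
      n + 3*k + 3 ≤ kappa n k S R c ∧ kappa n k S R c < n + 3*k + 3 + n := by
    intro c hc
    rcases hm5 c hc with ⟨i, hi, rfl⟩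
    rw [kappa_x hR, if_neg hi]
    have := i.isLt
    omega
  have hb6 : ∀ c ∈ ((rYs n k R).sort (·≤·)).map (yP n k),
      n + 3*k + 3 + n ≤ kappa n k S R c ∧
        kappa n k S R c < n + 3*k + 3 + n + (2*k+1) := by
    intro c hc
    rcases hm6 c hc with ⟨j, hj, rfl⟩
    rw [kappa_y, if_pos hj]
    have := j.isLt
    omega
  have hb7 : ∀ c ∈ ((rDs n k R).sort (·≤·)).map (dP n k),
      n + 3*k + 3 + n + (2*k+1) ≤ kappa n k S R c := by
    intro c hc
    rcases hm7 c hc with ⟨j, hj, rfl⟩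
    rw [kappa_d, if_pos hj]
    omega
  have hbp := kappa_p (n := n) (k := k) (S := S) (R := R) hR
  -- within-block pairwise
  have hp1 : ((S.sort (·≤·)).map (xP n k)).Pairwise
      fun a b => kappa n k S R a < kappa n k S R b := by
    rw [List.pairwise_map]
    refine (Finset.sortedLT_sort S).pairwise.imp_of_mem ?_
    intro a b ha hb hab
    rw [kappa_x hR, kappa_x hR, if_pos ((Finset.mem_sort _).mp ha),
      if_pos ((Finset.mem_sort _).mp hb)]
    simpa using hab
  have hp2 : (((kYs n k R).sort (·≤·)).map (yP n k)).Pairwise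
      fun a b => kappa n k S R a < kappa n k S R b := by
    rw [List.pairwise_map]
    refine (Finset.sortedLT_sort _).pairwise.imp_of_mem ?_
    intro a b ha hb hab
    have ha' : yP n k a ∉ R := by
      have := (Finset.mem_sort _).mp ha
      simpa [kYs] using this
    have hb' : yP n k b ∉ R := by
      have := (Finset.mem_sort _).mp hb
      simpa [kYs] using this
    rw [kappa_y, kappa_y, if_neg ha', if_neg hb']
    have : (a : ℕ) < b := hab
    omega
  have hp3 : (((kDs n k R).sort (·≤·)).map (dP n k)).Pairwise
      fun a b => kappa n k S R a < kappa n k S R b := by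
    rw [List.pairwise_map]
    refine (Finset.sortedLT_sort _).pairwise.imp_of_mem ?_
    intro a b ha hb hab
    have ha' : dP n k a ∉ R := by
      have := (Finset.mem_sort _).mp ha
      simpa [kDs] using this
    have hb' : dP n k b ∉ R := by
      have := (Finset.mem_sort _).mp hb
      simpa [kDs] using this
    rw [kappa_d, kappa_d, if_neg ha', if_neg hb']
    have : (a : ℕ) < b := hab
    omega
  have hp5 : ((Sᶜ.sort (·≤·)).map (xP n k)).Pairwise
      fun a b => kappa n k S R a < kappa n k S R b := by
    rw [List.pairwise_map]
    refine (Finset.sortedLT_sort _).pairwise.imp_of_mem ?_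
    intro a b ha hb hab
    have ha' : a ∉ S := by simpa using (Finset.mem_sort _).mp ha
    have hb' : b ∉ S := by simpa using (Finset.mem_sort _).mp hb
    rw [kappa_x hR, kappa_x hR, if_neg ha', if_neg hb']
    have : (a : ℕ) < b := hab
    omega
  have hp6 : (((rYs n k R).sort (·≤·)).map (yP n k)).Pairwise
      fun a b => kappa n k S R a < kappa n k S R b := by
    rw [List.pairwise_map]
    refine (Finset.sortedLT_sort _).pairwise.imp_of_mem ?_
    intro a b ha hb hab
    have ha' : yP n k a ∈ R := by
      have := (Finset.mem_sort _).mp ha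
      simpa [rYs] using this
    have hb' : yP n k b ∈ R := by
      have := (Finset.mem_sort _).mp hb
      simpa [rYs] using this
    rw [kappa_y, kappa_y, if_pos ha', if_pos hb']
    have : (a : ℕ) < b := hab
    omega
  have hp7 : (((rDs n k R).sort (·≤·)).map (dP n k)).Pairwise
      fun a b => kappa n k S R a < kappa n k S R b := by
    rw [List.pairwise_map]
    refine (Finset.sortedLT_sort _).pairwise.imp_of_mem ?_
    intro a b ha hb hab
    have ha' : dP n k a ∈ R := by
      have := (Finset.mem_sort _).mp ha
      simpa [rDs] using this
    have hb' : dP n k b ∈ R := by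
      have := (Finset.mem_sort _).mp hb
      simpa [rDs] using this
    rw [kappa_d, kappa_d, if_pos ha', if_pos hb']
    have : (a : ℕ) < b := hab
    omega
  -- assemble
  rw [bigL, List.pairwise_append]
  refine ⟨hp1, ?_, ?_⟩
  · rw [List.pairwise_append]
    refine ⟨hp2, ?_, ?_⟩
    · rw [List.pairwise_append]
      refine ⟨hp3, ?_, ?_⟩
      · rw [List.pairwise_cons]
        refine ⟨?_, ?_⟩
        · intro b hb
          rw [List.mem_append] at hb
          rcases hb with hb | hb
          · have := (hb5 b hb).1; omega
          · rw [List.mem_append] at hb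
            rcases hb with hb | hb
            · have := (hb6 b hb).1; omega
            · have := hb7 b hb; omega
        · rw [List.pairwise_append]
          refine ⟨hp5, ?_, ?_⟩
          · rw [List.pairwise_append]
            refine ⟨hp6, hp7, ?_⟩
            intro a ha b hb
            have := (hb6 a ha).2
            have := hb7 b hb
            omega
          · intro a ha b hb
            have := (hb5 a ha).2
            rw [List.mem_append] at hb
            rcases hb with hb | hb
            · have := (hb6 b hb).1; omega
            · have := hb7 b hb; omega
      · intro a ha b hb
        have h3 := (hb3 a ha).2
        rcases List.mem_cons.mp hb with rfl | hb
        · omega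
        · rw [List.mem_append] at hb
          rcases hb with hb | hb
          · have := (hb5 b hb).1; omega
          · rw [List.mem_append] at hb
            rcases hb with hb | hb
            · have := (hb6 b hb).1; omega
            · have := hb7 b hb; omega
    · intro a ha b hb
      have h2 := (hb2 a ha).2
      rw [List.mem_append] at hb
      rcases hb with hb | hb
      · have := (hb3 b hb).1; omega
      · rcases List.mem_cons.mp hb with rfl | hb
        · omega
        · rw [List.mem_append] at hb
          rcases hb with hb | hb
          · have := (hb5 b hb).1; omega
          · rw [List.mem_append] at hb
            rcases hb with hb | hb
            · have := (hb6 b hb).1; omega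
            · have := hb7 b hb; omega
  · intro a ha b hb
    have h1 := hb1 a ha
    rw [List.mem_append] at hb
    rcases hb with hb | hb
    · have := (hb2 b hb).1; omega
    · rw [List.mem_append] at hb
      rcases hb with hb | hb
      · have := (hb3 b hb).1; omega
      · rcases List.mem_cons.mp hb with rfl | hb
        · omega
        · rw [List.mem_append] at hb
          rcases hb with hb | hb
          · have := (hb5 b hb).1; omega
          · rw [List.mem_append] at hb
            rcases hb with hb | hb
            · have := (hb6 b hb).1; omega
            · have := hb7 b hb; omega

lemma mem_bigL (c : Proj n k) : c ∈ bigL n k S R := by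
  rcases c with (i | j) | (j | u)
  · rcases em (i ∈ S) with h | h
    · exact List.mem_append.mpr (Or.inl (List.mem_map.mpr ⟨i, (Finset.mem_sort _).mpr h, rfl⟩))
    · refine List.mem_append.mpr (Or.inr (List.mem_append.mpr (Or.inr (List.mem_append.mpr
        (Or.inr (List.mem_cons.mpr (Or.inr (List.mem_append.mpr (Or.inl ?_)))))))))
      exact List.mem_map.mpr ⟨i, (Finset.mem_sort _).mpr (by simpa using h), rfl⟩
  · rcases em (yP n k j ∈ R) with h | h
    · refine List.mem_append.mpr (Or.inr (List.mem_append.mpr (Or.inr (List.mem_append.mpr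
        (Or.inr (List.mem_cons.mpr (Or.inr (List.mem_append.mpr (Or.inr (List.mem_append.mpr
          (Or.inl ?_)))))))))))
      exact List.mem_map.mpr ⟨j, (Finset.mem_sort _).mpr (by simp [rYs, h]), rfl⟩
    · refine List.mem_append.mpr (Or.inr (List.mem_append.mpr (Or.inl ?_)))
      exact List.mem_map.mpr ⟨j, (Finset.mem_sort _).mpr (by simp [kYs, h]), rfl⟩
  · rcases em (dP n k j ∈ R) with h | h
    · refine List.mem_append.mpr (Or.inr (List.mem_append.mpr (Or.inr (List.mem_append.mpr
        (Or.inr (List.mem_cons.mpr (Or.inr (List.mem_append.mpr (Or.inr (List.mem_append.mpr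
          (Or.inr ?_)))))))))))
      exact List.mem_map.mpr ⟨j, (Finset.mem_sort _).mpr (by simp [rDs, h]), rfl⟩
    · refine List.mem_append.mpr (Or.inr (List.mem_append.mpr (Or.inr (List.mem_append.mpr
        (Or.inl ?_)))))
      exact List.mem_map.mpr ⟨j, (Finset.mem_sort _).mpr (by simp [kDs, h]), rfl⟩
  · cases u
    exact List.mem_append.mpr (Or.inr (List.mem_append.mpr (Or.inr (List.mem_append.mpr
      (Or.inr (List.mem_cons.mpr (Or.inl rfl)))))))

lemma bigL_nodup (hR : ∀ c ∈ R, isY c ∨ isD c) : (bigL n k S R).Nodup :=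
  (bigL_pairwise hR).imp fun h => ne_of_apply_ne _ (Nat.ne_of_lt h)

lemma consOrder_eq (hR : ∀ c ∈ R, isY c ∨ isD c) (E : PB (Proj n k) Unit)
    (hA : E.A = fun _ => Aset n k S R) :
    PB.consOrderAV E (fun c c' => decide (rank0 n k c < rank0 n k c')) = bigL n k S R := by
  classical
  have hsc : ∀ c, E.score c = if c ∈ Aset n k S R then 1 else 0 := by
    intro c
    rw [score_unit, hA]
  set le : Proj n k → Proj n k → Bool := fun c c' =>
    decide (E.score c' < E.score c) ||
      (decide (E.score c = E.score c') &&
        (decide (rank0 n k c < rank0 n k c') || decide (c = c'))) with hle_def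
  have hle : ∀ c c', le c c' = true ↔ kappa n k S R c ≤ kappa n k S R c' := by
    intro c c'
    have h1 := rank0_lt c
    have h2 := rank0_lt c'
    simp only [hle_def, Bool.or_eq_true, Bool.and_eq_true, decide_eq_true_eq, hsc, kappa]
    by_cases hc : c ∈ Aset n k S R <;> by_cases hc' : c' ∈ Aset n k S R <;>
        simp only [hc, hc', if_true, if_false, ite_true, ite_false, zero_add] <;>
        constructor
    · rintro (h | ⟨h, h' | rfl⟩) <;> omega
    · intro h
      rcases Nat.lt_trichotomy (rank0 n k c) (rank0 n k c') with h' | h' | h'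
      · exact Or.inr ⟨by trivial, Or.inl h'⟩
      · exact Or.inr ⟨by trivial, Or.inr (rank0_inj h')⟩
      · exfalso; omega
    · rintro (h | ⟨h, h' | rfl⟩) <;> omega
    · intro h
      exact Or.inl (by omega)
    · rintro (h | ⟨h, h' | rfl⟩) <;> omega
    · intro h
      exfalso; omega
    · rintro (h | ⟨h, h' | rfl⟩) <;> omega
    · intro h
      rcases Nat.lt_trichotomy (rank0 n k c) (rank0 n k c') with h' | h' | h'
      · exact Or.inr ⟨by trivial, Or.inl h'⟩
      · exact Or.inr ⟨by trivial, Or.inr (rank0_inj h')⟩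
      · exfalso; omega
  have htrans : ∀ a b c, le a b = true → le b c = true → le a c = true := fun a b c hab hbc =>
    (hle _ _).mpr (le_trans ((hle _ _).mp hab) ((hle _ _).mp hbc))
  have htotal : ∀ a b, (le a b || le b a) = true := by
    intro a b
    rcases le_total (kappa n k S R a) (kappa n k S R b) with h | h
    · simp [(hle _ _).mpr h]
    · simp [(hle _ _).mpr h]
  have hM : PB.consOrderAV E (fun c c' => decide (rank0 n k c < rank0 n k c')) =
      (Finset.univ : Finset (Proj n k)).toList.mergeSort le := rfl
  have hsorted : ((Finset.univ : Finset (Proj n k)).toList.mergeSort le).Pairwise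
      fun a b => kappa n k S R a ≤ kappa n k S R b :=
    (List.pairwise_mergeSort htrans htotal _).imp fun h => (hle _ _).mp h
  have hperm : ((Finset.univ : Finset (Proj n k)).toList.mergeSort le).Perm (bigL n k S R) := by
    refine (List.mergeSort_perm _ _).trans ?_
    refine List.perm_of_nodup_nodup_toFinset_eq (Finset.nodup_toList _) (bigL_nodup hR) ?_
    rw [Finset.toList_toFinset]
    exact (Finset.eq_univ_iff_forall.mpr fun c => List.mem_toFinset.mpr (mem_bigL c)).symm
  rw [hM]
  haveI : IsAntisymm (Proj n k) (fun a b => kappa n k S R a ≤ kappa n k S R b) :=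
    ⟨fun a b h1 h2 => kappa_inj (le_antisymm h1 h2)⟩
  exact hperm.eq_of_pairwise (fun a b _ _ h1 h2 => kappa_inj (le_antisymm h1 h2)) hsorted
    ((bigL_pairwise hR).imp le_of_lt)

section Fold
variable {C : Type*} [DecidableEq C] (B : ℕ) (cost : C → ℕ)

def gstep : Finset C → C → Finset C :=
  fun W c => if (∑ x ∈ W, cost x) + cost c ≤ B then insert c W else W

lemma fold_none {l : List C} {W : Finset C}
    (h : ∀ c ∈ l, B < (∑ x ∈ W, cost x) + cost c) :
    l.foldl (gstep B cost) W = W := by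
  induction l with
  | nil => rfl
  | cons c l ih =>
      rw [List.foldl_cons]
      have : gstep B cost W c = W := by
        simp only [gstep, if_neg (not_le.mpr (h c (by simp)))]
      rw [this]
      exact ih fun c hc => h c (by simp [hc])

lemma fold_all {l : List C} {W : Finset C} (hn : l.Nodup) (hd : ∀ c ∈ l, c ∉ W)
    (h : (∑ x ∈ W, cost x) + (l.map cost).sum ≤ B) :
    l.foldl (gstep B cost) W = W ∪ l.toFinset ∧
      (∑ x ∈ (W ∪ l.toFinset), cost x) = (∑ x ∈ W, cost x) + (l.map cost).sum := by
  induction l generalizing W with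
  | nil => simp
  | cons c l ih =>
      have hc : c ∉ W := hd c (by simp)
      have hfit : (∑ x ∈ W, cost x) + cost c ≤ B := by
        simp only [List.map_cons, List.sum_cons] at h; omega
      have hsum : (∑ x ∈ insert c W, cost x) = cost c + ∑ x ∈ W, cost x :=
        Finset.sum_insert hc
      have hd' : ∀ a ∈ l, a ∉ insert c W := by
        intro a ha
        simp only [Finset.mem_insert, not_or]
        exact ⟨fun e => (List.nodup_cons.mp hn).1 (e ▸ ha), hd a (by simp [ha])⟩
      have h' : (∑ x ∈ insert c W, cost x) + (l.map cost).sum ≤ B := by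
        rw [hsum]; simp only [List.map_cons, List.sum_cons] at h; omega
      obtain ⟨h1, h2⟩ := ih (List.nodup_cons.mp hn).2 hd' h'
      constructor
      · simp only [List.foldl_cons, gstep, if_pos hfit, h1, List.toFinset_cons]
        ext a
        simp only [Finset.mem_union, Finset.mem_insert, List.mem_toFinset, List.mem_cons]
        tauto
      · have : W ∪ (c :: l).toFinset = insert c W ∪ l.toFinset := by
          ext a
          simp only [Finset.mem_union, Finset.mem_insert, List.mem_toFinset, List.toFinset_cons,
            List.mem_cons]
          tauto
        rw [this, h2, hsum]
        simp only [List.map_cons, List.sum_cons]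
        omega

lemma mem_fold_iff {l : List C} {W : Finset C} {p : C} (hp : p ∉ l) :
    p ∈ l.foldl (gstep B cost) W ↔ p ∈ W := by
  induction l generalizing W with
  | nil => simp
  | cons c l ih =>
      have hpc : p ≠ c := fun e => hp (by simp [e])
      simp only [List.foldl_cons, gstep]
      split
      · rw [ih (fun h => hp (by simp [h]))]; simp [hpc]
      · exact ih (fun h => hp (by simp [h]))

end Fold

lemma sum_sort {α : Type*} [LinearOrder α] (s : Finset α) (f : α → ℕ) :
    ((s.sort (·≤·)).map f).sum = ∑ i ∈ s, f i :=
  ((Finset.sort_perm_toList s _).map f).sum_eq.trans (Finset.sum_map_toList s f)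

end Main
end S1

theorem stmt1 (n k t : ℕ) (u : Fin n → ℕ) (hu : ∀ i, 0 < u i)
    (ht : 0 < t) (hk : 0 < k) (htsum : t ≤ ∑ i, u i)
    (S : Finset (Fin n)) (R : Finset (Proj n k))
    (hR : ∀ c ∈ R, isY c ∨ isD c)
    (hcard : S.card + R.card ≤ k) :
    pProj n k ∈ PB.greedyAV
        ({ E0 u t k with
            A := fun _ =>
              ((E0 u t k).A () ∪ S.image fun i => (Sum.inl (Sum.inl i) : Proj n k)) \ R } :
          PB (Proj n k) Unit)
        (fun c c' => decide (rank0 n k c < rank0 n k c')) ↔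
      ∑ i ∈ S, u i = t := by
  classical
  set E' : PB (Proj n k) Unit :=
    { E0 u t k with
        A := fun _ =>
          ((E0 u t k).A () ∪ S.image fun i => (Sum.inl (Sum.inl i) : Proj n k)) \ R } with hE'
  have hA : E'.A = fun _ => S1.Aset n k S R := rfl
  have horder := S1.consOrder_eq (S := S) hR E' hA
  have hg : PB.greedyAV E' (fun c c' => decide (rank0 n k c < rank0 n k c')) =
      (S1.bigL n k S R).foldl
        (S1.gstep ((k + 1) * (3 * ∑ j, u j)) (cost0 u t k)) ∅ := by
    unfold PB.greedyAV PB.greedyFold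
    rw [horder]
    rfl
  rw [hg]
  set T := 3 * ∑ j, u j with hT
  set σ := ∑ i ∈ S, u i with hσdef
  -- basic arithmetic facts
  have hσle : σ ≤ ∑ j, u j := Finset.sum_le_sum_of_subset (Finset.subset_univ S)
  have hσT : σ ≤ T := by omega
  have htT : 3 * t ≤ T := by omega
  have hkT : (k + 1) * T = k * T + T := by ring
  have hSk : S.card ≤ k := le_trans (Nat.le_add_right _ _) hcard
  have hmulS : S.card * T ≤ k * T := Nat.mul_le_mul_right _ hSk
  -- cost values
  have hcx : ∀ i : Fin n, cost0 u t k (S1.xP n k i) = T + u i := fun _ => rfl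
  have hcy : ∀ j : Fin (2 * k + 1), cost0 u t k (S1.yP n k j) = T := fun _ => rfl
  have hcd : ∀ j : Fin (k + 1), cost0 u t k (S1.dP n k j) = T - t + 1 := fun _ => rfl
  have hcp : cost0 u t k (pProj n k) = T - t := rfl
  -- counting facts
  have hkYcompl : S1.kYs n k R = (S1.rYs n k R)ᶜ := by
    ext j; simp [S1.kYs, S1.rYs]
  have hkDcompl : S1.kDs n k R = (S1.rDs n k R)ᶜ := by
    ext j; simp [S1.kDs, S1.rDs]
  have hkYcard : (S1.kYs n k R).card = (2 * k + 1) - (S1.rYs n k R).card := by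
    rw [hkYcompl, Finset.card_compl]; simp
  have hkDcard : (S1.kDs n k R).card = (k + 1) - (S1.rDs n k R).card := by
    rw [hkDcompl, Finset.card_compl]; simp
  have him : (S1.rYs n k R).image (S1.yP n k) ∪ (S1.rDs n k R).image (S1.dP n k) ⊆ R := by
    intro c hc
    rcases Finset.mem_union.mp hc with h | h <;> obtain ⟨j, hj, rfl⟩ := Finset.mem_image.mp h
    · exact (Finset.mem_filter.mp hj).2
    · exact (Finset.mem_filter.mp hj).2
  have hdisj : Disjoint ((S1.rYs n k R).image (S1.yP n k))
      ((S1.rDs n k R).image (S1.dP n k)) := by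
    rw [Finset.disjoint_left]
    rintro c hc1 hc2
    obtain ⟨j1, _, rfl⟩ := Finset.mem_image.mp hc1
    obtain ⟨j2, _, he⟩ := Finset.mem_image.mp hc2
    simp [S1.yP, S1.dP] at he
  have hryrd : (S1.rYs n k R).card + (S1.rDs n k R).card ≤ R.card := by
    have h2 := Finset.card_le_card him
    rwa [Finset.card_union_of_disjoint hdisj, Finset.card_image_of_injective _ S1.yP_inj,
      Finset.card_image_of_injective _ S1.dP_inj] at h2
  have hkey : S.card + (S1.rYs n k R).card + (S1.rDs n k R).card ≤ k := by omega
  -- abbreviations for lists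
  set lX : List (Proj n k) := (S.sort (· ≤ ·)).map (S1.xP n k) with hlX
  set lY : List (Proj n k) := ((S1.kYs n k R).sort (· ≤ ·)).map (S1.yP n k) with hlY
  set lD : List (Proj n k) := ((S1.kDs n k R).sort (· ≤ ·)).map (S1.dP n k) with hlD
  have hmemX : ∀ c ∈ lX, ∃ i, c = S1.xP n k i := by
    intro c hc; obtain ⟨i, _, rfl⟩ := List.mem_map.mp hc; exact ⟨i, rfl⟩
  have hmemY : ∀ c ∈ lY, ∃ j, c = S1.yP n k j := by
    intro c hc; obtain ⟨j, _, rfl⟩ := List.mem_map.mp hc; exact ⟨j, rfl⟩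
  have hmemD : ∀ c ∈ lD, ∃ j, c = S1.dP n k j := by
    intro c hc; obtain ⟨j, _, rfl⟩ := List.mem_map.mp hc; exact ⟨j, rfl⟩
  have hlYlen : lY.length = 2 * k + 1 - (S1.rYs n k R).card := by
    rw [hlY, List.length_map, Finset.length_sort, hkYcard]
  have hlDlen : lD.length = k + 1 - (S1.rDs n k R).card := by
    rw [hlD, List.length_map, Finset.length_sort, hkDcard]
  -- unfold bigL and split the fold
  rw [S1.bigL]
  simp only [List.foldl_append, List.foldl_cons]
  -- remove the trailing blocks
  have hp5 : pProj n k ∉ (Sᶜ.sort (· ≤ ·)).map (S1.xP n k) := by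
    simp only [List.mem_map]
    rintro ⟨i, -, h⟩
    simp [S1.xP, pProj] at h
  have hp6 : pProj n k ∉ ((S1.rYs n k R).sort (· ≤ ·)).map (S1.yP n k) := by
    simp only [List.mem_map]
    rintro ⟨j, -, h⟩
    simp [S1.yP, pProj] at h
  have hp7 : pProj n k ∉ ((S1.rDs n k R).sort (· ≤ ·)).map (S1.dP n k) := by
    simp only [List.mem_map]
    rintro ⟨j, -, h⟩
    simp [S1.dP, pProj] at h
  rw [S1.mem_fold_iff _ _ hp7, S1.mem_fold_iff _ _ hp6, S1.mem_fold_iff _ _ hp5]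
  rw [← hlY, ← hlD]
  -- phase 1 : the x-projects of S all fit
  have hnod1 : lX.Nodup := (Finset.sort_nodup _ _).map S1.xP_inj
  have hsum1 : (lX.map (cost0 u t k)).sum = S.card * T + σ := by
    rw [hlX, List.map_map,
      show (cost0 u t k ∘ S1.xP n k) = (fun i : Fin n => T + u i) from rfl,
      S1.sum_sort S (fun i : Fin n => T + u i), Finset.sum_add_distrib, Finset.sum_const,
      smul_eq_mul]
  obtain ⟨hW1, hW1sum⟩ := S1.fold_all ((k + 1) * T) (cost0 u t k) (W := ∅) hnod1 (by simp)
    (by rw [hsum1, Finset.sum_empty]; omega)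
  rw [Finset.empty_union] at hW1 hW1sum
  rw [Finset.sum_empty, zero_add, hsum1] at hW1sum
  rw [hW1]
  have hW1shape : ∀ c ∈ lX.toFinset, ∃ i, c = S1.xP n k i := fun c hc =>
    hmemX c (List.mem_toFinset.mp hc)
  have hndY : lY.Nodup := (Finset.sort_nodup _ _).map S1.yP_inj
  -- main case split
  by_cases hσ0 : σ = 0
  · -- S is empty
    have hS0 : S.card = 0 := by
      by_contra hne
      obtain ⟨i, hi⟩ := Finset.card_pos.mp (Nat.pos_of_ne_zero hne)
      have h1 : u i ≤ σ := Finset.single_le_sum (f := u) (fun i _ => Nat.zero_le _) hi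
      have h2 := hu i
      omega
    have hST : S.card * T = 0 := by rw [hS0]; ring
    -- phase 2 : k+1 y-projects fit, the rest do not
    have hqle : k + 1 ≤ lY.length := by omega
    rw [← List.take_append_drop (k + 1) lY, List.foldl_append]
    have htake_sub := List.take_sublist (k + 1) lY
    have hnd2 : (lY.take (k + 1)).Nodup := htake_sub.nodup hndY
    have hd2 : ∀ c ∈ lY.take (k + 1), c ∉ lX.toFinset := by
      intro c hc hcW
      obtain ⟨j, rfl⟩ := hmemY c (htake_sub.subset hc)
      obtain ⟨i, hi⟩ := hW1shape _ hcW
      simp [S1.xP, S1.yP] at hi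
    have hsum2 : ((lY.take (k + 1)).map (cost0 u t k)).sum = (k + 1) * T := by
      rw [List.sum_eq_card_nsmul _ T ?_, List.length_map, List.length_take,
        min_eq_left hqle, smul_eq_mul]
      intro x hx
      obtain ⟨c, hc, rfl⟩ := List.mem_map.mp hx
      obtain ⟨j, rfl⟩ := hmemY c (htake_sub.subset hc)
      exact hcy j
    obtain ⟨hW2, hW2sum⟩ := S1.fold_all ((k + 1) * T) (cost0 u t k) hnd2 hd2
      (by rw [hW1sum, hsum2]; omega)
    rw [hW2]
    rw [hW1sum, hsum2] at hW2sum
    have hdrop : (lY.drop (k + 1)).foldl (S1.gstep ((k + 1) * T) (cost0 u t k))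
        (lX.toFinset ∪ (lY.take (k + 1)).toFinset) =
        lX.toFinset ∪ (lY.take (k + 1)).toFinset := by
      apply S1.fold_none
      intro c hc
      obtain ⟨j, rfl⟩ := hmemY c ((List.drop_sublist (k + 1) lY).subset hc)
      rw [hW2sum, hcy]
      omega
    rw [hdrop]
    -- phase 3 : no d-project fits
    have hdfold : lD.foldl (S1.gstep ((k + 1) * T) (cost0 u t k))
        (lX.toFinset ∪ (lY.take (k + 1)).toFinset) =
        lX.toFinset ∪ (lY.take (k + 1)).toFinset := by
      apply S1.fold_none
      intro c hc
      obtain ⟨j, rfl⟩ := hmemD c hc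
      rw [hW2sum, hcd]
      omega
    rw [hdfold]
    -- p does not fit
    have hpnot : pProj n k ∉ lX.toFinset ∪ (lY.take (k + 1)).toFinset := by
      intro h
      rcases Finset.mem_union.mp h with h | h
      · obtain ⟨i, hi⟩ := hW1shape _ h
        simp [pProj, S1.xP] at hi
      · obtain ⟨j, hj⟩ := hmemY _ (htake_sub.subset (List.mem_toFinset.mp h))
        simp [pProj, S1.yP] at hj
    simp only [S1.gstep]
    split_ifs with hfit
    · rw [hW2sum, hcp] at hfit
      exact absurd hfit (by omega)
    · exact iff_of_false hpnot (by omega)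
  · -- S is nonempty : σ > 0
    have hσpos : 0 < σ := Nat.pos_of_ne_zero hσ0
    -- phase 2 : exactly k - S.card y-projects fit
    have hqle : k - S.card ≤ lY.length := by omega
    rw [← List.take_append_drop (k - S.card) lY, List.foldl_append]
    have htake_sub := List.take_sublist (k - S.card) lY
    have hnd2 : (lY.take (k - S.card)).Nodup := htake_sub.nodup hndY
    have hd2 : ∀ c ∈ lY.take (k - S.card), c ∉ lX.toFinset := by
      intro c hc hcW
      obtain ⟨j, rfl⟩ := hmemY c (htake_sub.subset hc)
      obtain ⟨i, hi⟩ := hW1shape _ hcW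
      simp [S1.xP, S1.yP] at hi
    have hsum2 : ((lY.take (k - S.card)).map (cost0 u t k)).sum = (k - S.card) * T := by
      rw [List.sum_eq_card_nsmul _ T ?_, List.length_map, List.length_take,
        min_eq_left hqle, smul_eq_mul]
      intro x hx
      obtain ⟨c, hc, rfl⟩ := List.mem_map.mp hx
      obtain ⟨j, rfl⟩ := hmemY c (htake_sub.subset hc)
      exact hcy j
    have hsplit : S.card * T + (k - S.card) * T = k * T := by
      rw [← add_mul]
      congr 1
      omega
    obtain ⟨hW2, hW2sum⟩ := S1.fold_all ((k + 1) * T) (cost0 u t k) hnd2 hd2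
      (by rw [hW1sum, hsum2]; omega)
    rw [hW2]
    rw [hW1sum, hsum2] at hW2sum
    have hW2sum' : (∑ x ∈ lX.toFinset ∪ (lY.take (k - S.card)).toFinset, cost0 u t k x) =
        k * T + σ := by omega
    have hdrop : (lY.drop (k - S.card)).foldl (S1.gstep ((k + 1) * T) (cost0 u t k))
        (lX.toFinset ∪ (lY.take (k - S.card)).toFinset) =
        lX.toFinset ∪ (lY.take (k - S.card)).toFinset := by
      apply S1.fold_none
      intro c hc
      obtain ⟨j, rfl⟩ := hmemY c ((List.drop_sublist (k - S.card) lY).subset hc)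
      rw [hW2sum', hcy]
      omega
    rw [hdrop]
    have hW2shape : ∀ c ∈ lX.toFinset ∪ (lY.take (k - S.card)).toFinset,
        (∃ i, c = S1.xP n k i) ∨ (∃ j, c = S1.yP n k j) := by
      intro c hc
      rcases Finset.mem_union.mp hc with h | h
      · exact Or.inl (hW1shape _ h)
      · exact Or.inr (hmemY _ (htake_sub.subset (List.mem_toFinset.mp h)))
    have hpnot : pProj n k ∉ lX.toFinset ∪ (lY.take (k - S.card)).toFinset := by
      intro h
      rcases hW2shape _ h with ⟨i, hi⟩ | ⟨j, hj⟩
      · simp [pProj, S1.xP] at hi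
      · simp [pProj, S1.yP] at hj
    -- phase 3 : the d-projects
    by_cases hσt : σ < t
    · -- one d-project fits, then nothing more fits
      have hlDne : lD ≠ [] := by
        intro h
        have := congrArg List.length h
        rw [hlDlen] at this
        simp at this
        omega
      obtain ⟨c0, lD', hlD0⟩ := List.exists_cons_of_ne_nil hlDne
      have hc0mem : c0 ∈ lD := by rw [hlD0]; simp
      obtain ⟨j0, hj0⟩ := hmemD c0 hc0mem
      have hc0cost : cost0 u t k c0 = T - t + 1 := by rw [hj0]; exact hcd j0
      have hc0notW2 : c0 ∉ lX.toFinset ∪ (lY.take (k - S.card)).toFinset := by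
        intro h
        rw [hj0] at h
        rcases hW2shape _ h with ⟨i, hi⟩ | ⟨j, hj⟩
        · simp [S1.dP, S1.xP] at hi
        · simp [S1.dP, S1.yP] at hj
      rw [hlD0, List.foldl_cons]
      have hstep : S1.gstep ((k + 1) * T) (cost0 u t k)
          (lX.toFinset ∪ (lY.take (k - S.card)).toFinset) c0 =
          insert c0 (lX.toFinset ∪ (lY.take (k - S.card)).toFinset) := by
        simp only [S1.gstep]
        rw [hW2sum', hc0cost, if_pos (by omega)]
      rw [hstep]
      have hW3sum : (∑ x ∈ insert c0 (lX.toFinset ∪ (lY.take (k - S.card)).toFinset),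
          cost0 u t k x) = (T - t + 1) + (k * T + σ) := by
        rw [Finset.sum_insert hc0notW2, hW2sum', hc0cost]
      have hdtail : lD'.foldl (S1.gstep ((k + 1) * T) (cost0 u t k))
          (insert c0 (lX.toFinset ∪ (lY.take (k - S.card)).toFinset)) =
          insert c0 (lX.toFinset ∪ (lY.take (k - S.card)).toFinset) := by
        apply S1.fold_none
        intro c hc
        obtain ⟨j, rfl⟩ := hmemD c (by rw [hlD0]; simp [hc])
        rw [hW3sum, hcd]
        omega
      rw [hdtail]
      have hpnot3 : pProj n k ∉
          insert c0 (lX.toFinset ∪ (lY.take (k - S.card)).toFinset) := by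
        intro h
        rcases Finset.mem_insert.mp h with h | h
        · rw [hj0] at h
          simp [pProj, S1.dP] at h
        · exact hpnot h
      simp only [S1.gstep]
      split_ifs with hfit
      · rw [hW3sum, hcp] at hfit
        exact absurd hfit (by omega)
      · exact iff_of_false hpnot3 (by omega)
    · -- t ≤ σ : no d-project fits ; p fits iff σ = t
      have hdfold : lD.foldl (S1.gstep ((k + 1) * T) (cost0 u t k))
          (lX.toFinset ∪ (lY.take (k - S.card)).toFinset) =
          lX.toFinset ∪ (lY.take (k - S.card)).toFinset := by
        apply S1.fold_none
        intro c hc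
        obtain ⟨j, rfl⟩ := hmemD c hc
        rw [hW2sum', hcd]
        omega
      rw [hdfold]
      simp only [S1.gstep]
      split_ifs with hfit
      · rw [hW2sum', hcp] at hfit
        exact iff_of_true (Finset.mem_insert_self _ _) (by omega)
      · rw [hW2sum', hcp] at hfit
        exact iff_of_false hpnot (by omega)
end

section
/- Let u_1, …, u_n be positive integers, T = u_1 + … + u_n, and let t and k be integers with 0 < t < T and k ≥ 0. Let E be the PB instance with projects C = {x_1,…,x_n, p}, costs cost(x_i) = u_i and cost(p) = 2T − t, budget B = 2T, and a single voter who approves only p; run GreedyAV with cheaper-first tie-breaking. Then the number of sets F of exactly k approval flips (equivalently, size-k subsets of C whose approval status is toggled for the voter) such that p ∈ GreedyAV(E_F) equals the number of subsets S ⊆ {1,…,n} with |S| = k and Σ_{i∈S} u_i ≤ t. -/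
open Finset




/-! Statement 5: counting briberies in the `#P`-hardness reduction for
GreedyAV with cheaper-first tie-breaking (budget `2T`). -/

/-- Costs: `cost(x_i) = u_i` and `cost(p) = 2T − t`, where `T = u_1 + … + u_n`. -/
def cost5 {n : ℕ} (u : Fin n → ℕ) (t : ℕ) : (Fin n ⊕ Unit) → ℕ
  | .inl i => u i
  | .inr _ => 2 * (∑ j, u j) - t

/-- The PB instance: a single voter approving only `p`, budget `2T`. -/
def E5 {n : ℕ} (u : Fin n → ℕ) (t : ℕ) : PB (Fin n ⊕ Unit) Unit where
  A := fun _ => {Sum.inr ()}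
  budget := 2 * ∑ j, u j
  cost := cost5 u t



section GreedyLemmas

variable {C : Type} [DecidableEq C] (budget : ℕ) (cost : C → ℕ)

private theorem gfold_subset : ∀ (L : List C) (W : Finset C),
    W ⊆ L.foldl (fun W c => if (∑ x ∈ W, cost x) + cost c ≤ budget then insert c W else W) W := by
  intro L
  induction L with
  | nil => intro W; simp
  | cons c L ih =>
    intro W
    simp only [List.foldl_cons]
    refine subset_trans ?_ (ih _)
    split
    · exact Finset.subset_insert _ _
    · exact Finset.Subset.refl W

private theorem gfold_not_mem {p : C} : ∀ (L : List C) (W : Finset C), p ∉ W → p ∉ L →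
    p ∉ L.foldl (fun W c => if (∑ x ∈ W, cost x) + cost c ≤ budget then insert c W else W) W := by
  intro L
  induction L with
  | nil => intro W h _; simpa using h
  | cons c L ih =>
    intro W hW hL
    simp only [List.mem_cons, not_or] at hL
    simp only [List.foldl_cons]
    apply ih
    · split
      · simp [Finset.mem_insert, hW, hL.1]
      · exact hW
    · exact hL.2

private theorem gfold_full : ∀ (L : List C) (W : Finset C), L.Nodup → (∀ c ∈ L, c ∉ W) →
    (∑ x ∈ W, cost x) + (L.map cost).sum ≤ budget →
    L.foldl (fun W c => if (∑ x ∈ W, cost x) + cost c ≤ budget then insert c W else W) W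
      = W ∪ L.toFinset := by
  intro L
  induction L with
  | nil => intro W _ _ _; simp
  | cons c L ih =>
    intro W hnd hdisj hb
    simp only [List.map_cons, List.sum_cons] at hb
    have hcW : c ∉ W := hdisj c (by simp)
    have h1 : (∑ x ∈ W, cost x) + cost c ≤ budget := by omega
    simp only [List.foldl_cons, if_pos h1]
    rw [ih (insert c W) (List.Nodup.of_cons hnd) ?_ ?_]
    · ext x
      simp only [List.toFinset_cons, Finset.mem_union, Finset.mem_insert, List.mem_toFinset]
      tauto
    · intro d hd
      simp only [Finset.mem_insert, not_or]
      exact ⟨fun h => (List.nodup_cons.mp hnd).1 (h ▸ hd), hdisj d (by simp [hd])⟩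
    · rw [Finset.sum_insert hcW]; omega

private theorem mem_greedyFold_iff {p : C} {m1 m2 : List C}
    (hnd : (m1 ++ p :: m2).Nodup) (hb : (m1.map cost).sum ≤ budget) :
    p ∈ PB.greedyFold budget cost (m1 ++ p :: m2) ↔ (m1.map cost).sum + cost p ≤ budget := by
  rw [List.nodup_append] at hnd
  obtain ⟨hnd1, hnd2, hdisj⟩ := hnd
  have hp1 : p ∉ m1 := fun h => hdisj p h p (by simp) rfl
  have hp2 : p ∉ m2 := (List.nodup_cons.mp hnd2).1
  unfold PB.greedyFold
  rw [List.foldl_append, gfold_full budget cost m1 ∅ hnd1 (by simp) (by simpa using hb),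
    Finset.empty_union]
  simp only [List.foldl_cons]
  have hsum : ∑ x ∈ m1.toFinset, cost x = (m1.map cost).sum := List.sum_toFinset _ hnd1
  rw [hsum]
  by_cases hle : (m1.map cost).sum + cost p ≤ budget
  · rw [if_pos hle]
    simp only [hle, iff_true]
    exact gfold_subset budget cost m2 _ (Finset.mem_insert_self p _)
  · rw [if_neg hle]
    simp only [hle, iff_false]
    exact gfold_not_mem budget cost m2 _ (by simp [List.mem_toFinset, hp1]) hp2

end GreedyLemmas

section Rel

variable {C : Type} [DecidableEq C]

private def relR (sc co : C → ℕ) (prec0 : C → C → Bool) (c c' : C) : Bool :=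
  decide (sc c' < sc c) || (decide (sc c = sc c') && (PB.cheaperFirst co prec0 c c' || decide (c = c')))

private theorem relR_iff (sc co : C → ℕ) (prec0 : C → C → Bool) (c c' : C) :
    relR sc co prec0 c c' = true ↔
      sc c' < sc c ∨ (sc c = sc c' ∧
        ((co c < co c' ∨ (co c = co c' ∧ prec0 c c' = true)) ∨ c = c')) := by
  simp [relR, PB.cheaperFirst]

private theorem relR_trans (sc co : C → ℕ) (prec0 : C → C → Bool)
    (hlin : IsStrictTotalOrder C fun a b => prec0 a b = true) :
    ∀ a b c, relR sc co prec0 a b = true → relR sc co prec0 b c = true →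
      relR sc co prec0 a c = true := by
  haveI := hlin
  intro a b c hab hbc
  rw [relR_iff] at hab hbc ⊢
  rcases hab with h | ⟨hs, h⟩
  · rcases hbc with g | ⟨gs, g⟩
    · exact Or.inl (by omega)
    · exact Or.inl (by omega)
  · rcases hbc with g | ⟨gs, g⟩
    · exact Or.inl (by omega)
    · refine Or.inr ⟨by omega, ?_⟩
      rcases h with h | rfl
      · rcases g with g | rfl
        · left
          rcases h with h | ⟨hc, hp⟩
          · rcases g with g | ⟨gc, gp⟩
            · exact Or.inl (by omega)
            · exact Or.inl (by omega)
          · rcases g with g | ⟨gc, gp⟩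
            · exact Or.inl (by omega)
            · exact Or.inr ⟨by omega,
                IsTrans.trans (r := fun a b => prec0 a b = true) a b c hp gp⟩
        · exact Or.inl h
      · exact g

private theorem relR_total (sc co : C → ℕ) (prec0 : C → C → Bool)
    (hlin : IsStrictTotalOrder C fun a b => prec0 a b = true) :
    ∀ a b, (relR sc co prec0 a b || relR sc co prec0 b a) = true := by
  haveI := hlin
  intro a b
  rw [Bool.or_eq_true, relR_iff, relR_iff]
  rcases lt_trichotomy (sc a) (sc b) with h | h | h
  · exact Or.inr (Or.inl h)
  · rcases lt_trichotomy (co a) (co b) with g | g | g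
    · exact Or.inl (Or.inr ⟨h, Or.inl (Or.inl g)⟩)
    · by_cases hab : a = b
      · exact Or.inl (Or.inr ⟨h, Or.inr hab⟩)
      · rcases trichotomous_of (fun a b => prec0 a b = true) a b with p | p | p
        · exact Or.inl (Or.inr ⟨h, Or.inl (Or.inr ⟨g, p⟩)⟩)
        · exact absurd p hab
        · exact Or.inr (Or.inr ⟨h.symm, Or.inl (Or.inr ⟨g.symm, p⟩)⟩)
    · exact Or.inr (Or.inr ⟨h.symm, Or.inl (Or.inl g)⟩)
  · exact Or.inl (Or.inl h)

private theorem relR_antisymm (sc co : C → ℕ) (prec0 : C → C → Bool)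
    (hlin : IsStrictTotalOrder C fun a b => prec0 a b = true) :
    ∀ a b, relR sc co prec0 a b = true → relR sc co prec0 b a = true → a = b := by
  haveI := hlin
  intro a b hab hba
  rw [relR_iff] at hab hba
  rcases hab with h | ⟨hs, h⟩
  · rcases hba with g | ⟨gs, g⟩ <;> omega
  · rcases hba with g | ⟨gs, g⟩
    · omega
    · rcases h with h | rfl
      · rcases g with g | rfl
        · rcases h with h | ⟨hc, hp⟩
          · rcases g with g | ⟨gc, gp⟩ <;> omega
          · rcases g with g | ⟨gc, gp⟩
            · omega
            · exact absurd (IsTrans.trans (r := fun a b => prec0 a b = true) a b a hp gp)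
                (irrefl_of (fun a b => prec0 a b = true) a)
        · rfl
      · rfl

private theorem mergeSort_decomp (R : C → C → Bool)
    (htr : ∀ a b c, R a b = true → R b c = true → R a c = true)
    (hto : ∀ a b, (R a b || R b a) = true)
    (hanti : ∀ a b, R a b = true → R b a = true → a = b)
    (l : List C) (hl : l.Nodup) (p : C) (hp : p ∈ l) :
    ∃ m1 m2 : List C, l.mergeSort R = m1 ++ p :: m2 ∧ (m1 ++ p :: m2).Nodup ∧
      m1.toFinset = l.toFinset.filter (fun c => c ≠ p ∧ R c p = true) := by
  have hperm := List.mergeSort_perm l R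
  have hnd : (l.mergeSort R).Nodup := hperm.nodup_iff.mpr hl
  have hsorted := List.pairwise_mergeSort htr hto l
  have hpm : p ∈ l.mergeSort R := hperm.mem_iff.mpr hp
  obtain ⟨m1, m2, heq⟩ := List.append_of_mem hpm
  refine ⟨m1, m2, heq, heq ▸ hnd, ?_⟩
  rw [heq] at hsorted hnd
  rw [List.pairwise_append] at hsorted
  have hdisj := (List.nodup_append.mp hnd).2.2
  ext c
  simp only [List.mem_toFinset, Finset.mem_filter]
  constructor
  · intro hc
    refine ⟨?_, ?_, hsorted.2.2 c hc p (by simp)⟩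
    · have : c ∈ l.mergeSort R := by rw [heq]; exact List.mem_append.mpr (Or.inl hc)
      exact hperm.mem_iff.mp this
    · rintro rfl
      exact hdisj _ hc _ (by simp) rfl
  · rintro ⟨hcl, hcp, hR⟩
    have hcm : c ∈ m1 ++ p :: m2 := by rw [← heq]; exact hperm.mem_iff.mpr hcl
    rcases List.mem_append.mp hcm with h | h
    · exact h
    · rcases List.mem_cons.mp h with rfl | h
      · exact absurd rfl hcp
      · have hpc : R p c = true := (List.pairwise_cons.mp hsorted.2.1).1 c h
        exact absurd (hanti c p hR hpc) hcp

end Rel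

theorem stmt5 (n k t : ℕ) (u : Fin n → ℕ) (hu : ∀ i, 0 < u i)
    (ht : 0 < t) (htT : t < ∑ i, u i)
    (prec0 : (Fin n ⊕ Unit) → (Fin n ⊕ Unit) → Bool)
    (hlin : IsStrictTotalOrder (Fin n ⊕ Unit) fun a b => prec0 a b = true) :
    (Finset.univ.filter fun F : Finset (Unit × (Fin n ⊕ Unit)) =>
        F.card = k ∧ (Sum.inr () : Fin n ⊕ Unit) ∈
          PB.greedyAV ((E5 u t).flip F) (PB.cheaperFirst (cost5 u t) prec0)).card =
      (Finset.univ.filter fun S : Finset (Fin n) =>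
        S.card = k ∧ ∑ i ∈ S, u i ≤ t).card := by
  classical
  have hT1 : 0 < ∑ i, u i := lt_trans ht htT
  -- key characterization of when p is selected
  have key : ∀ F : Finset (Unit × (Fin n ⊕ Unit)),
      ((Sum.inr () : Fin n ⊕ Unit) ∈
          PB.greedyAV ((E5 u t).flip F) (PB.cheaperFirst (cost5 u t) prec0)) ↔
      (((), (Sum.inr () : Fin n ⊕ Unit)) ∉ F ∧
        ∑ i ∈ Finset.univ.filter (fun i => ((), (Sum.inl i : Fin n ⊕ Unit)) ∈ F), u i ≤ t) := by
    intro F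
    set P : Fin n ⊕ Unit := Sum.inr () with hP
    set E : PB (Fin n ⊕ Unit) Unit := (E5 u t).flip F with hE
    have himg : ∀ c : Fin n ⊕ Unit, c ∈ F.image Prod.snd ↔ ((), c) ∈ F := by
      intro c
      constructor
      · intro h
        obtain ⟨q, hq, rfl⟩ := Finset.mem_image.mp h
        exact hq
      · intro h
        exact Finset.mem_image.mpr ⟨((), c), h, rfl⟩
    have hA : ∀ c : Fin n ⊕ Unit, c ∈ E.A () ↔
        ((c = P ∧ ((), c) ∉ F) ∨ (c ≠ P ∧ ((), c) ∈ F)) := by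
      intro c
      have : E.A () = symmDiff {P} ((F.filter fun q => q.1 = ()).image Prod.snd) := rfl
      rw [this, Finset.filter_true_of_mem (fun q _ => rfl)]
      rw [Finset.mem_symmDiff]
      simp only [Finset.mem_singleton, himg]
      tauto
    have hscore : ∀ c, E.score c = if c ∈ E.A () then 1 else 0 := by
      intro c
      by_cases h : c ∈ E.A () <;>
        simp [PB.score, Finset.univ_unique, Finset.filter_singleton, h]
    have hscoreP : E.score P = if ((), P) ∈ F then 0 else 1 := by
      rw [hscore]
      by_cases h : ((), P) ∈ F <;> simp [hA, h]
    have hscorei : ∀ i : Fin n, E.score (Sum.inl i) = if ((), (Sum.inl i : Fin n ⊕ Unit)) ∈ F then 1 else 0 := by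
      intro i
      rw [hscore]
      by_cases h : ((), (Sum.inl i : Fin n ⊕ Unit)) ∈ F <;> simp [hA, h, hP]
    have hui : ∀ i, u i ≤ ∑ j, u j := fun i =>
      Finset.single_le_sum (fun j _ => Nat.zero_le _) (Finset.mem_univ i)
    have hcostlt : ∀ i : Fin n, cost5 u t (Sum.inl i) < cost5 u t P := by
      intro i
      show u i < 2 * (∑ j, u j) - t
      have := hui i
      omega
    -- decompose the sorted list
    obtain ⟨m1, m2, heq, hnd, hm1⟩ := mergeSort_decomp (relR E.score (cost5 u t) prec0)
      (relR_trans _ _ _ hlin) (relR_total _ _ _ hlin) (relR_antisymm _ _ _ hlin)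
      (Finset.univ : Finset (Fin n ⊕ Unit)).toList (Finset.nodup_toList _) P
      (by simp [Finset.mem_toList])
    have hco : PB.consOrderAV E (PB.cheaperFirst (cost5 u t) prec0) = m1 ++ P :: m2 := heq
    have hnd1 : m1.Nodup := (List.nodup_append.mp hnd).1
    rw [Finset.toList_toFinset] at hm1
    have hgre : PB.greedyAV E (PB.cheaperFirst (cost5 u t) prec0) =
        PB.greedyFold (2 * ∑ j, u j) (cost5 u t) (m1 ++ P :: m2) := by
      rw [PB.greedyAV, hco]; rfl
    have hsum1 : (m1.map (cost5 u t)).sum =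
        ∑ c ∈ Finset.univ.filter (fun c => c ≠ P ∧
          relR E.score (cost5 u t) prec0 c P = true), cost5 u t c := by
      rw [← hm1, List.sum_toFinset _ hnd1]
    by_cases hPF : ((), P) ∈ F
    · -- p was flipped away: everything comes before p, p does not fit
      have hall : ∀ c : Fin n ⊕ Unit, c ≠ P → relR E.score (cost5 u t) prec0 c P = true := by
        intro c hc
        rw [relR_iff]
        cases c with
        | inr v => exact absurd rfl hc
        | inl i =>
          by_cases hi : ((), (Sum.inl i : Fin n ⊕ Unit)) ∈ F
          · left; rw [hscorei, if_pos hi, hscoreP, if_pos hPF]; norm_num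
          · right
            refine ⟨by rw [hscorei, if_neg hi, hscoreP, if_pos hPF], Or.inl (Or.inl (hcostlt i))⟩
      have hset : Finset.univ.filter (fun c => c ≠ P ∧
          relR E.score (cost5 u t) prec0 c P = true) = Finset.univ.image Sum.inl := by
        ext c
        cases c with
        | inl i =>
          have h1 : (Sum.inl i : Fin n ⊕ Unit) ≠ P := by simp [hP]
          exact iff_of_true (Finset.mem_filter.mpr ⟨Finset.mem_univ _, h1, hall _ h1⟩)
            (Finset.mem_image.mpr ⟨i, Finset.mem_univ i, rfl⟩)
        | inr v =>
          cases v
          simp [hP, hall]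
      have hsumval : (m1.map (cost5 u t)).sum = ∑ j, u j := by
        rw [hsum1, hset, Finset.sum_image (fun x _ y _ h => Sum.inl.inj h)]
        rfl
      have hnotin : P ∉ PB.greedyFold (2 * ∑ j, u j) (cost5 u t) (m1 ++ P :: m2) := by
        rw [mem_greedyFold_iff _ _ hnd (by rw [hsumval]; omega), hsumval]
        show ¬((∑ j, u j) + (2 * (∑ j, u j) - t) ≤ 2 * ∑ j, u j)
        omega
      rw [hgre]
      simp [hnotin, hPF]
    · -- p still approved: exactly the flipped x_i's come before p
      have hiff : ∀ i : Fin n, relR E.score (cost5 u t) prec0 (Sum.inl i) P = true ↔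
          ((), (Sum.inl i : Fin n ⊕ Unit)) ∈ F := by
        intro i
        rw [relR_iff]
        by_cases hi : ((), (Sum.inl i : Fin n ⊕ Unit)) ∈ F
        · simp only [hi, iff_true]
          right
          exact ⟨by rw [hscorei, if_pos hi, hscoreP, if_neg hPF], Or.inl (Or.inl (hcostlt i))⟩
        · simp only [hi, iff_false]
          rw [hscorei, if_neg hi, hscoreP, if_neg hPF]
          rintro (h | ⟨h, -⟩) <;> omega
      have hset : Finset.univ.filter (fun c => c ≠ P ∧
          relR E.score (cost5 u t) prec0 c P = true) =
          (Finset.univ.filter fun i : Fin n =>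
            ((), (Sum.inl i : Fin n ⊕ Unit)) ∈ F).image Sum.inl := by
        ext c
        cases c with
        | inl i =>
          simp only [Finset.mem_filter, Finset.mem_univ, true_and, Finset.mem_image]
          constructor
          · rintro ⟨-, hR⟩
            exact ⟨i, (hiff i).mp hR, rfl⟩
          · rintro ⟨j, hj, hji⟩
            have hji' : j = i := Sum.inl.inj hji
            subst hji'
            exact ⟨by simp [hP], (hiff j).mpr hj⟩
        | inr v =>
          cases v
          simp [hP]
      have hsumval : (m1.map (cost5 u t)).sum =
          ∑ i ∈ Finset.univ.filter (fun i => ((), (Sum.inl i : Fin n ⊕ Unit)) ∈ F), u i := by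
        rw [hsum1, hset, Finset.sum_image (fun x _ y _ h => Sum.inl.inj h)]
        rfl
      have hle : (m1.map (cost5 u t)).sum ≤ 2 * ∑ j, u j := by
        rw [hsumval]
        calc ∑ i ∈ Finset.univ.filter (fun i => ((), (Sum.inl i : Fin n ⊕ Unit)) ∈ F), u i
            ≤ ∑ i, u i := Finset.sum_le_sum_of_subset (Finset.filter_subset _ _)
          _ ≤ 2 * ∑ j, u j := by omega
      rw [hgre, mem_greedyFold_iff _ _ hnd hle, hsumval]
      have : cost5 u t P = 2 * (∑ j, u j) - t := rfl
      rw [this]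
      have hs := Finset.sum_le_sum_of_subset
        (Finset.filter_subset (fun i => ((), (Sum.inl i : Fin n ⊕ Unit)) ∈ F) Finset.univ)
        (f := u)
      simp only [hPF, not_false_iff, true_and]
      omega
  -- now the bijection
  have hrw : (Finset.univ.filter fun F : Finset (Unit × (Fin n ⊕ Unit)) =>
      F.card = k ∧ (Sum.inr () : Fin n ⊕ Unit) ∈
        PB.greedyAV ((E5 u t).flip F) (PB.cheaperFirst (cost5 u t) prec0)) =
      (Finset.univ.filter fun F : Finset (Unit × (Fin n ⊕ Unit)) =>
        F.card = k ∧ (((), (Sum.inr () : Fin n ⊕ Unit)) ∉ F ∧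
          ∑ i ∈ Finset.univ.filter (fun i => ((), (Sum.inl i : Fin n ⊕ Unit)) ∈ F), u i ≤ t)) := by
    ext F
    simp only [Finset.mem_filter, Finset.mem_univ, true_and, key F]
  rw [hrw]
  have finj : Function.Injective (fun i : Fin n => (((), (Sum.inl i : Fin n ⊕ Unit)) : Unit × (Fin n ⊕ Unit))) := by
    intro a b h
    simpa using h
  have hFeq : ∀ F : Finset (Unit × (Fin n ⊕ Unit)), ((), (Sum.inr () : Fin n ⊕ Unit)) ∉ F →
      F = (Finset.univ.filter fun i : Fin n => ((), (Sum.inl i : Fin n ⊕ Unit)) ∈ F).image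
        (fun i : Fin n => (((), (Sum.inl i : Fin n ⊕ Unit)) : Unit × (Fin n ⊕ Unit))) := by
    intro F hPF
    ext q
    obtain ⟨v, c⟩ := q
    cases v
    cases c with
    | inl i =>
      simp only [Finset.mem_image, Finset.mem_filter, Finset.mem_univ, true_and]
      constructor
      · intro h; exact ⟨i, h, rfl⟩
      · rintro ⟨j, hj, hji⟩
        have : j = i := by simpa using hji
        exact this ▸ hj
    | inr v' =>
      cases v'
      simp only [Finset.mem_image, Finset.mem_filter, Finset.mem_univ, true_and]
      constructor
      · intro h; exact absurd h hPF
      · rintro ⟨j, _, hji⟩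
        simp at hji
  have hback : ∀ S : Finset (Fin n),
      Finset.univ.filter (fun i : Fin n => ((), (Sum.inl i : Fin n ⊕ Unit)) ∈
        S.image (fun i : Fin n => (((), (Sum.inl i : Fin n ⊕ Unit)) : Unit × (Fin n ⊕ Unit)))) = S := by
    intro S
    ext i
    simp only [Finset.mem_filter, Finset.mem_univ, true_and, Finset.mem_image]
    constructor
    · rintro ⟨j, hj, hji⟩
      have : j = i := by simpa using hji
      exact this ▸ hj
    · intro h; exact ⟨i, h, rfl⟩
  refine Finset.card_bij'
    (fun F _ => Finset.univ.filter fun i : Fin n => ((), (Sum.inl i : Fin n ⊕ Unit)) ∈ F)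
    (fun S _ => S.image (fun i : Fin n => (((), (Sum.inl i : Fin n ⊕ Unit)) : Unit × (Fin n ⊕ Unit))))
    ?_ ?_ ?_ ?_
  · intro F hF
    simp only [Finset.mem_filter, Finset.mem_univ, true_and] at hF ⊢
    obtain ⟨hcard, hPF, hsum⟩ := hF
    refine ⟨?_, hsum⟩
    have := hFeq F hPF
    rw [this, Finset.card_image_of_injective _ finj] at hcard
    exact hcard
  · intro S hS
    simp only [Finset.mem_filter, Finset.mem_univ, true_and] at hS ⊢
    obtain ⟨hcard, hsum⟩ := hS
    refine ⟨by rw [Finset.card_image_of_injective _ finj]; exact hcard, ?_, ?_⟩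
    · intro h
      obtain ⟨j, _, hj⟩ := Finset.mem_image.mp h
      simp at hj
    · rw [hback S]; exact hsum
  · intro F hF
    simp only [Finset.mem_filter, Finset.mem_univ, true_and] at hF
    exact (hFeq F hF.2.1).symm
  · intro S _
    exact hback S
end

section
/- Let u_1, …, u_n be positive integers and t, k positive integers such that u_i < t for every i, k < n, and every subset S ⊆ {1,…,n} with |S| < k satisfies Σ_{i∈S} u_i < t. Let E be the PB instance with projects C = {p, c_1,…,c_n, d_1,…,d_{k+1}}, costs cost(p) = t, cost(c_i) = u_i, cost(d_j) = t + 1, a single voter who approves exactly the projects in C ∖ {p}, budget B = u_1 + … + u_n, and GreedyCost run with a tie-breaking order ≻ whose most-preferred element is p. Then there exists a set F of at most k approval flips with p ∈ GreedyCost(E_F) if and only if there exists S ⊆ {1,…,n} with |S| = k and Σ_{i∈S} u_i = t. -/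
/-! ### Generic lemmas about the greedy fold -/

section Greedy
variable {C : Type*} [DecidableEq C] (b : ℕ) (cost : C → ℕ)

/-- One step of the greedy algorithm. -/
def gstep (W : Finset C) (c : C) : Finset C :=
  if (∑ x ∈ W, cost x) + cost c ≤ b then insert c W else W

lemma subset_foldl_gstep (W : Finset C) (l : List C) :
    W ⊆ l.foldl (gstep b cost) W := by
  induction l generalizing W with
  | nil => exact Finset.Subset.refl W
  | cons a tl ih =>
    refine Finset.Subset.trans ?_ (ih (gstep b cost W a))
    unfold gstep; split
    · exact Finset.subset_insert a W
    · exact Finset.Subset.refl W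

lemma foldl_gstep_subset (W : Finset C) (l : List C) :
    l.foldl (gstep b cost) W ⊆ W ∪ l.toFinset := by
  induction l generalizing W with
  | nil => simp
  | cons a tl ih =>
    refine Finset.Subset.trans (ih (gstep b cost W a)) ?_
    intro x hx
    simp only [Finset.mem_union, List.toFinset_cons, Finset.mem_insert] at hx ⊢
    unfold gstep at hx
    split at hx
    · rcases hx with hx | hx
      · rcases Finset.mem_insert.1 hx with h | h
        · exact Or.inr (Or.inl h)
        · exact Or.inl h
      · exact Or.inr (Or.inr hx)
    · tauto

lemma foldl_gstep_all_reject (W : Finset C) (l : List C)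
    (h : ∀ c ∈ l, b < (∑ x ∈ W, cost x) + cost c) :
    l.foldl (gstep b cost) W = W := by
  induction l with
  | nil => rfl
  | cons a tl ih =>
    have ha := h a (List.mem_cons_self)
    have : gstep b cost W a = W := by unfold gstep; rw [if_neg (by omega)]
    rw [List.foldl_cons, this, ih fun c hc => h c (List.mem_cons_of_mem a hc)]

lemma foldl_gstep_all_fit (W : Finset C) (l : List C) (hn : l.Nodup)
    (hd : ∀ c ∈ l, c ∉ W)
    (h : (∑ x ∈ W, cost x) + (∑ c ∈ l.toFinset, cost c) ≤ b) :
    l.foldl (gstep b cost) W = W ∪ l.toFinset := by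
  induction l generalizing W with
  | nil => simp
  | cons a tl ih =>
    have haW : a ∉ W := hd a (List.mem_cons_self)
    have hatl : a ∉ tl := (List.nodup_cons.1 hn).1
    have hsum : ∑ c ∈ (a :: tl).toFinset, cost c = cost a + ∑ c ∈ tl.toFinset, cost c := by
      rw [List.toFinset_cons, Finset.sum_insert (mt List.mem_toFinset.1 hatl)]
    have hfit : (∑ x ∈ W, cost x) + cost a ≤ b := by omega
    have hstep : gstep b cost W a = insert a W := by unfold gstep; rw [if_pos hfit]
    rw [List.foldl_cons, hstep, ih (insert a W) (List.nodup_cons.1 hn).2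
      (fun c hc => by
        simp only [Finset.mem_insert, not_or]
        exact ⟨fun he => hatl (he ▸ hc), hd c (List.mem_cons_of_mem a hc)⟩)
      (by rw [Finset.sum_insert haW]; omega)]
    rw [List.toFinset_cons]
    ext x; simp; try tauto

lemma foldl_gstep_uniform (γ : ℕ) (W : Finset C) (l : List C) (hn : l.Nodup)
    (hd : ∀ c ∈ l, c ∉ W) (hγ : ∀ c ∈ l, cost c = γ) :
    ∃ q ≤ l.length,
      (∑ x ∈ l.foldl (gstep b cost) W, cost x) = (∑ x ∈ W, cost x) + q * γ ∧
      (q = l.length ∨ b < (∑ x ∈ l.foldl (gstep b cost) W, cost x) + γ) ∧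
      (q = 0 ∨ (∑ x ∈ W, cost x) + γ ≤ b) := by
  induction l generalizing W with
  | nil => exact ⟨0, le_refl 0, by simp, Or.inl rfl, Or.inl rfl⟩
  | cons a tl ih =>
    have haW : a ∉ W := hd a (List.mem_cons_self)
    have hatl : a ∉ tl := (List.nodup_cons.1 hn).1
    have hca : cost a = γ := hγ a (List.mem_cons_self)
    by_cases hfit : (∑ x ∈ W, cost x) + cost a ≤ b
    · have hstep : gstep b cost W a = insert a W := by unfold gstep; rw [if_pos hfit]
      obtain ⟨q, hq, hsum, halt, -⟩ := ih (insert a W) (List.nodup_cons.1 hn).2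
        (fun c hc => by
          simp only [Finset.mem_insert, not_or]
          exact ⟨fun he => hatl (he ▸ hc), hd c (List.mem_cons_of_mem a hc)⟩)
        (fun c hc => hγ c (List.mem_cons_of_mem a hc))
      refine ⟨q + 1, by simpa using Nat.succ_le_succ hq, ?_, ?_, Or.inr (by omega)⟩
      · rw [List.foldl_cons, hstep, hsum, Finset.sum_insert haW, hca]; ring
      · rcases halt with h | h
        · exact Or.inl (by simp [h])
        · exact Or.inr (by rw [List.foldl_cons, hstep]; exact h)
    · have hstep : gstep b cost W a = W := by unfold gstep; rw [if_neg hfit]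
      have hrej : tl.foldl (gstep b cost) W = W := by
        apply foldl_gstep_all_reject
        intro c hc
        rw [hγ c (List.mem_cons_of_mem a hc), ← hca]
        omega
      refine ⟨0, Nat.zero_le _, ?_, Or.inr ?_, Or.inl rfl⟩
      · rw [List.foldl_cons, hstep, hrej]; simp
      · rw [List.foldl_cons, hstep, hrej, ← hca]; omega

lemma mem_foldl_gstep_split (p : C) (l₁ l₂ : List C)
    (h1 : p ∉ l₁) (h2 : p ∉ l₂) :
    (p ∈ (l₁ ++ p :: l₂).foldl (gstep b cost) ∅ ↔
      (∑ x ∈ l₁.foldl (gstep b cost) ∅, cost x) + cost p ≤ b) := by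
  set W₁ := l₁.foldl (gstep b cost) (∅ : Finset C) with hW₁
  have hpW₁ : p ∉ W₁ := by
    intro h
    have := foldl_gstep_subset b cost ∅ l₁ h
    simp only [Finset.empty_union, List.mem_toFinset] at this
    exact h1 this
  rw [List.foldl_append, List.foldl_cons]
  by_cases hfit : (∑ x ∈ W₁, cost x) + cost p ≤ b
  · simp only [hfit, iff_true]
    have hstep : gstep b cost W₁ p = insert p W₁ := by unfold gstep; rw [if_pos hfit]
    rw [hstep]
    exact subset_foldl_gstep b cost _ l₂ (Finset.mem_insert_self p W₁)
  · simp only [hfit, iff_false]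
    have hstep : gstep b cost W₁ p = W₁ := by unfold gstep; rw [if_neg hfit]
    rw [hstep]
    intro hmem
    have := foldl_gstep_subset b cost W₁ l₂ hmem
    rcases Finset.mem_union.1 this with h | h
    · exact hpW₁ h
    · exact h2 (List.mem_toFinset.1 h)

omit [DecidableEq C] in
lemma pairwise_filter_append {R : C → C → Prop} (Pb : C → Bool) :
    ∀ l : List C, l.Pairwise R →
      (∀ x ∈ l, ∀ y ∈ l, R x y → Pb y = true → Pb x = true) →
      l = l.filter Pb ++ l.filter (fun x => !Pb x) := by
  intro l
  induction l with
  | nil => simp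
  | cons a tl ih =>
    intro hp hcond
    rcases List.pairwise_cons.1 hp with ⟨ha, htl⟩
    by_cases hPa : Pb a = true
    · rw [List.filter_cons_of_pos hPa, List.filter_cons_of_neg (by simp [hPa])]
      rw [List.cons_append]
      congr 1
      exact ih htl fun x hx y hy hr hy' =>
        hcond x (List.mem_cons_of_mem a hx) y (List.mem_cons_of_mem a hy) hr hy'
    · have hall : ∀ b ∈ tl, Pb b = false := by
        intro c hc
        by_contra h
        have : Pb c = true := by simpa using h
        exact hPa (hcond a (List.mem_cons_self) c (List.mem_cons_of_mem a hc)
          (ha c hc) this)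
      rw [List.filter_cons_of_neg (by simp [hPa]),
        List.filter_cons_of_pos (by simp [hPa]),
        List.filter_eq_nil_iff.2 (fun c hc => by simp [hall c hc])]
      simp only [List.nil_append, List.cons.injEq, true_and]
      rw [List.filter_eq_self.2 (fun c hc => by simp [hall c hc])]

end Greedy

/-! ### The comparison relation used by GreedyCost -/

section Ratio
variable {C : Type*} [DecidableEq C]

def rrel (s w : C → ℕ) (prec : C → C → Bool) : C → C → Bool := fun c c' =>
  decide (s c' * w c < s c * w c') ||
    (decide (s c * w c' = s c' * w c) && (prec c c' || decide (c = c')))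

lemma rrel_trans (s w : C → ℕ) (hw : ∀ c, 0 < w c) (prec : C → C → Bool)
    (hlin : IsStrictTotalOrder C fun a b => prec a b = true) :
    ∀ a b c, rrel s w prec a b = true → rrel s w prec b c = true →
      rrel s w prec a c = true := by
  intro a b c hab hbc
  simp only [rrel, Bool.or_eq_true, decide_eq_true_eq, Bool.and_eq_true] at hab hbc ⊢
  have hwa := hw a; have hwb := hw b; have hwc := hw c
  rcases hab with hab | ⟨hab, pab⟩ <;> rcases hbc with hbc | ⟨hbc, pbc⟩
  · left; nlinarith
  · left; nlinarith
  · left; nlinarith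
  · right
    constructor
    · have : s a * w c * w b = s c * w a * w b := by nlinarith
      exact Nat.eq_of_mul_eq_mul_right hwb this
    · rcases pab with pab | rfl
      · rcases pbc with pbc | rfl
        · exact Or.inl (hlin.trans a b c pab pbc)
        · exact Or.inl pab
      · rcases pbc with pbc | rfl
        · exact Or.inl pbc
        · exact Or.inr rfl

lemma rrel_total (s w : C → ℕ) (prec : C → C → Bool)
    (hlin : IsStrictTotalOrder C fun a b => prec a b = true) :
    ∀ a b, rrel s w prec a b || rrel s w prec b a := by
  intro a b
  simp only [rrel, Bool.or_eq_true, decide_eq_true_eq, Bool.and_eq_true]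
  rcases Nat.lt_trichotomy (s b * w a) (s a * w b) with h | h | h
  · tauto
  · rcases (show prec a b = true ∨ a = b ∨ prec b a = true by
        rcases Classical.em (prec a b = true) with h1 | h1
        · exact Or.inl h1
        rcases Classical.em (prec b a = true) with h2 | h2
        · exact Or.inr (Or.inr h2)
        exact Or.inr (Or.inl (hlin.trichotomous a b h1 h2))) with hp | rfl | hp
    · exact Or.inl (Or.inr ⟨h.symm, Or.inl hp⟩)
    · exact Or.inl (Or.inr ⟨h.symm, Or.inr rfl⟩)
    · exact Or.inr (Or.inr ⟨h, Or.inl hp⟩)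
  · tauto

end Ratio

/-! The reduction from Sized Subset Sum to GreedyCost-Flip-Bribery
(Theorem `greedycost-pb-npc`). -/

/-- The projects: `p`, `c_1, …, c_n`, and the dummy projects `d_1, …, d_{k+1}`. -/
abbrev Proj8 (n k : ℕ) := Unit ⊕ (Fin n ⊕ Fin (k + 1))

/-- The preferred project `p`. -/
def pProj8 (n k : ℕ) : Proj8 n k := Sum.inl ()

/-- Costs: `cost(p) = t`, `cost(c_i) = u_i`, `cost(d_j) = t + 1`. -/
def cost8 {n : ℕ} (u : Fin n → ℕ) (t k : ℕ) : Proj8 n k → ℕ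
  | .inl _ => t
  | .inr (.inl i) => u i
  | .inr (.inr _) => t + 1

/-- The PB instance: a single voter approving everything except `p`, and
budget `B = u_1 + … + u_n`. -/
def E8 {n : ℕ} (u : Fin n → ℕ) (t k : ℕ) : PB (Proj8 n k) Unit where
  A := fun _ => Finset.univ.erase (Sum.inl ())
  budget := ∑ j, u j
  cost := cost8 u t k

lemma score_flip8 {n k : ℕ} (u : Fin n → ℕ) (t : ℕ) (F : Finset (Unit × Proj8 n k))
    (c : Proj8 n k) :
    PB.score ((E8 u t k).flip F) c =
      if c ∈ symmDiff (Finset.univ.erase (pProj8 n k)) (F.image Prod.snd) then 1 else 0 := by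
  have hv : ∀ v : Unit, (F.filter fun q => q.1 = v) = F := fun v =>
    Finset.filter_true_of_mem fun q _ => rfl
  have : PB.score ((E8 u t k).flip F) c =
      (Finset.univ.filter fun _ : Unit =>
        c ∈ symmDiff (Finset.univ.erase (pProj8 n k)) (F.image Prod.snd)).card := by
    unfold PB.score PB.flip E8 pProj8
    simp only [hv]
    simp
  rw [this, Finset.filter_const]
  split <;> simp
-- appended to proof.lean for testing
section Core
variable {n k t : ℕ} {u : Fin n → ℕ}

/-- Abbreviation for the `c_i` projects. -/
def ci8 (n k : ℕ) (i : Fin n) : Proj8 n k := Sum.inr (Sum.inl i)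
/-- Abbreviation for the `d_j` projects. -/
def dj8 (n k : ℕ) (j : Fin (k+1)) : Proj8 n k := Sum.inr (Sum.inr j)

lemma core8 (hu : ∀ i, 0 < u i) (ht : 0 < t) (hut : ∀ i, u i < t)
    {prec : Proj8 n k → Proj8 n k → Bool}
    (hlin : IsStrictTotalOrder (Proj8 n k) fun a b => prec a b = true)
    (hpfirst : ∀ c : Proj8 n k, c ≠ pProj8 n k → prec (pProj8 n k) c = true)
    (F : Finset (Unit × Proj8 n k)) (S : Finset (Fin n)) (D : Finset (Fin (k+1)))
    (hG : F.image Prod.snd = S.image (ci8 n k) ∪ D.image (dj8 n k)) :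
    ∃ q ≤ k + 1 - D.card,
      ((pProj8 n k ∈ PB.greedyCost ((E8 u t k).flip F) prec ↔
        (∑ i ∈ Finset.univ \ S, u i) + q * (t + 1) + t ≤ ∑ j, u j)) ∧
      (q = k + 1 - D.card ∨
        (∑ j, u j) < (∑ i ∈ Finset.univ \ S, u i) + q * (t + 1) + (t + 1)) ∧
      (q = 0 ∨ (∑ i ∈ Finset.univ \ S, u i) + (t + 1) ≤ ∑ j, u j) := by
  classical
  set EF := (E8 u t k).flip F with hEF
  set sc := EF.score with hsc
  set w : Proj8 n k → ℕ := cost8 u t k with hwdef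
  set G := F.image Prod.snd with hGdef
  set B := ∑ j, u j with hB
  set p : Proj8 n k := pProj8 n k with hp
  -- membership in G
  have hpG : p ∉ G := by
    rw [hG]
    simp [pProj8, ci8, dj8, hp]
  have hciG : ∀ i, (ci8 n k i ∈ G) ↔ i ∈ S := by
    intro i; rw [hG]; simp [ci8, dj8]
  have hdjG : ∀ j, (dj8 n k j ∈ G) ↔ j ∈ D := by
    intro j; rw [hG]; simp [ci8, dj8]
  have hciG' : ∀ i, ((Sum.inr (Sum.inl i) : Proj8 n k) ∈ G) ↔ i ∈ S := hciG
  have hdjG' : ∀ j, ((Sum.inr (Sum.inr j) : Proj8 n k) ∈ G) ↔ j ∈ D := hdjG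
  -- scores
  have hscore : ∀ c, sc c = if c ∈ symmDiff (Finset.univ.erase p) G then 1 else 0 :=
    fun c => score_flip8 u t F c
  have hscp : sc p = 0 := by
    rw [hscore p, if_neg]
    simp [Finset.mem_symmDiff, hpG]
  have hscc : ∀ i, sc (ci8 n k i) = if i ∈ S then 0 else 1 := by
    intro i
    rw [hscore]
    by_cases h : i ∈ S <;>
      simp [Finset.mem_symmDiff, hciG', h, ci8, hp, pProj8]
  have hscd : ∀ j, sc (dj8 n k j) = if j ∈ D then 0 else 1 := by
    intro j
    rw [hscore]
    by_cases h : j ∈ D <;>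
      simp [Finset.mem_symmDiff, hdjG', h, dj8, hp, pProj8]
  -- costs
  have hwp : w p = t := rfl
  have hwc : ∀ i, w (ci8 n k i) = u i := fun i => rfl
  have hwd : ∀ j, w (dj8 n k j) = t + 1 := fun j => rfl
  have hwpos : ∀ c, 0 < w c := by
    intro c
    rcases c with _ | (i | j)
    · exact ht
    · exact hu i
    · exact Nat.succ_pos t
  have hwEF : EF.cost = w := rfl
  have hBEF : EF.budget = B := rfl
  -- the consideration order
  set r : Proj8 n k → Proj8 n k → Bool := rrel sc w prec with hrdef
  have hLdef : PB.consOrderCost EF prec = (Finset.univ : Finset (Proj8 n k)).toList.mergeSort r := rfl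
  set L : List (Proj8 n k) := (Finset.univ : Finset (Proj8 n k)).toList.mergeSort r with hL
  have hpair : L.Pairwise (fun a b => r a b = true) := by
    exact List.pairwise_mergeSort (le := r)
      (rrel_trans sc w hwpos prec hlin) (rrel_total sc w prec hlin) _
  have hnodup : L.Nodup :=
    ((List.mergeSort_perm (Finset.univ : Finset (Proj8 n k)).toList r).nodup_iff).2
      (Finset.nodup_toList _)
  have hmemL : ∀ x : Proj8 n k, x ∈ L := fun x => List.mem_mergeSort.2 (by simp)
  obtain ⟨l₁, l₂, hsplit⟩ := List.append_of_mem (hmemL p)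
  have hnd : l₁.Nodup ∧ (p :: l₂).Nodup ∧ ∀ a ∈ l₁, a ∉ (p :: l₂) := by
    rw [hsplit] at hnodup
    exact ⟨hnodup.of_append_left, hnodup.of_append_right,
      fun a ha hb => (List.disjoint_of_nodup_append hnodup) ha hb⟩
  have np1 : p ∉ l₁ := fun h => hnd.2.2 p h (List.mem_cons_self)
  have np2 : p ∉ l₂ := (List.nodup_cons.1 hnd.2.1).1
  have hpairs := hsplit ▸ hpair
  obtain ⟨hpair1, hpair2, hcross⟩ := List.pairwise_append.1 hpairs
  have hrxp : ∀ x ∈ l₁, r x p = true := fun x hx =>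
    hcross x hx p (List.mem_cons_self)
  have hrpy : ∀ y ∈ l₂, r p y = true := fun y hy =>
    (List.pairwise_cons.1 hpair2).1 y hy
  -- boolean computations
  have hprec_asym : ∀ x : Proj8 n k, x ≠ p → prec x p = false := by
    intro x hx
    by_contra h
    have hxp : prec x p = true := by simpa using h
    exact absurd (hlin.trans p x p (hpfirst x hx) hxp) (hlin.irrefl p)
  have hr_p_x : ∀ x : Proj8 n k, sc x = 1 → r p x = false := by
    intro x h1
    simp only [hrdef, rrel, h1, hscp, hwp, Bool.or_eq_false_iff, Bool.and_eq_false_iff]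
    constructor
    · simp
    · left; simp; omega
  have hr_x_p : ∀ x : Proj8 n k, x ≠ p → sc x = 0 → r x p = false := by
    intro x hx h0
    simp only [hrdef, rrel, h0, hscp, hwp, Bool.or_eq_false_iff, Bool.and_eq_false_iff]
    refine ⟨by simp, Or.inr ?_⟩
    simp [hprec_asym x hx, hx]
  have hr_d_c : ∀ (j : Fin (k+1)) (i : Fin n), j ∉ D → i ∉ S →
      r (dj8 n k j) (ci8 n k i) = false := by
    intro j i hj hi
    simp only [hrdef, rrel, hscd j, hscc i, if_neg hj, if_neg hi, hwd, hwc,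
      Bool.or_eq_false_iff, Bool.and_eq_false_iff]
    have := hut i
    constructor
    · simp; omega
    · left; simp; omega
  -- the elements of l₁
  set Uc : Finset (Proj8 n k) := (Finset.univ \ S).image (ci8 n k) with hUc
  set Ud : Finset (Proj8 n k) := (Finset.univ \ D).image (dj8 n k) with hUd
  have hl1 : l₁.toFinset = Uc ∪ Ud := by
    ext x
    simp only [List.mem_toFinset, Finset.mem_union, hUc, hUd, Finset.mem_image,
      Finset.mem_sdiff, Finset.mem_univ, true_and]
    constructor
    · intro hx
      have hxp : x ≠ p := fun h => np1 (h ▸ hx)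
      rcases x with _ | (i | j)
      · exact absurd rfl hxp
      · left
        refine ⟨i, ?_, rfl⟩
        intro hi
        have h0 : sc (ci8 n k i) = 0 := by rw [hscc, if_pos hi]
        have := hr_x_p _ (by simp [ci8, hp, pProj8]) h0
        rw [show (Sum.inr (Sum.inl i) : Proj8 n k) = ci8 n k i from rfl] at hx
        rw [hrxp _ hx] at this
        exact absurd this (by simp)
      · right
        refine ⟨j, ?_, rfl⟩
        intro hj
        have h0 : sc (dj8 n k j) = 0 := by rw [hscd, if_pos hj]
        have := hr_x_p _ (by simp [dj8, hp, pProj8]) h0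
        rw [show (Sum.inr (Sum.inr j) : Proj8 n k) = dj8 n k j from rfl] at hx
        rw [hrxp _ hx] at this
        exact absurd this (by simp)
    · intro hx
      have h1 : sc x = 1 := by
        rcases hx with ⟨i, hi, rfl⟩ | ⟨j, hj, rfl⟩
        · rw [hscc, if_neg hi]
        · rw [hscd, if_neg hj]
      have hxp : x ≠ p := by
        rcases hx with ⟨i, hi, rfl⟩ | ⟨j, hj, rfl⟩ <;> simp [ci8, dj8, hp, pProj8]
      have hxL := hmemL x
      rw [hsplit, List.mem_append, List.mem_cons] at hxL
      rcases hxL with h | h | h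
      · exact h
      · exact absurd h hxp
      · have := hrpy x h
        rw [hr_p_x x h1] at this
        exact absurd this (by simp)
  -- split l₁ into the c-part and the d-part
  set isC : Proj8 n k → Bool := fun x => match x with
    | Sum.inr (Sum.inl _) => true
    | _ => false with hisC
  have hcond : ∀ x ∈ l₁, ∀ y ∈ l₁, (r x y = true) → isC y = true → isC x = true := by
    intro x hx y hy hr hy'
    have hyU : y ∈ Uc ∪ Ud := by rw [← hl1]; exact List.mem_toFinset.2 hy
    have hxU : x ∈ Uc ∪ Ud := by rw [← hl1]; exact List.mem_toFinset.2 hx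
    rcases Finset.mem_union.1 hxU with hxc | hxd
    · obtain ⟨i, hi, rfl⟩ := Finset.mem_image.1 hxc; rfl
    · obtain ⟨j, hj, rfl⟩ := Finset.mem_image.1 hxd
      exfalso
      rcases Finset.mem_union.1 hyU with hyc | hyd
      · obtain ⟨i, hi, rfl⟩ := Finset.mem_image.1 hyc
        rw [hr_d_c j i (Finset.mem_sdiff.1 hj).2 (Finset.mem_sdiff.1 hi).2] at hr
        exact absurd hr (by simp)
      · obtain ⟨j', hj', rfl⟩ := Finset.mem_image.1 hyd
        simp [hisC, dj8] at hy'
  have happ := pairwise_filter_append isC l₁ hpair1 hcond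
  set Lc := l₁.filter isC with hLc
  set Ld := l₁.filter (fun x => !isC x) with hLd
  have hndc : Lc.Nodup := hnd.1.filter _
  have hndd : Ld.Nodup := hnd.1.filter _
  have hLcF : Lc.toFinset = Uc := by
    rw [hLc, List.toFinset_filter, hl1]
    ext x
    simp only [Finset.mem_filter, Finset.mem_union]
    constructor
    · rintro ⟨hx | hx, hC⟩
      · exact hx
      · exfalso; obtain ⟨j, hj, rfl⟩ := Finset.mem_image.1 hx; simp [hisC, dj8] at hC
    · intro hx
      obtain ⟨i, hi, rfl⟩ := Finset.mem_image.1 hx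
      exact ⟨Or.inl hx, rfl⟩
  have hLdF : Ld.toFinset = Ud := by
    rw [hLd, List.toFinset_filter, hl1]
    ext x
    simp only [Finset.mem_filter, Finset.mem_union]
    constructor
    · rintro ⟨hx | hx, hC⟩
      · exfalso; obtain ⟨i, hi, rfl⟩ := Finset.mem_image.1 hx; simp [hisC, ci8] at hC
      · exact hx
    · intro hx
      obtain ⟨j, hj, rfl⟩ := Finset.mem_image.1 hx
      exact ⟨Or.inr hx, by simp [hisC, dj8]⟩
  -- sums and cardinalities
  have hinjc : Function.Injective (ci8 n k) := fun a b h => by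
    simpa [ci8] using h
  have hinjd : Function.Injective (dj8 n k) := fun a b h => by
    simpa [dj8] using h
  have hUcsum : ∑ x ∈ Uc, w x = ∑ i ∈ Finset.univ \ S, u i := by
    rw [hUc, Finset.sum_image (fun a _ b _ h => hinjc h)]
    rfl
  have hUdcard : Ud.card = k + 1 - D.card := by
    rw [hUd, Finset.card_image_of_injective _ hinjd, Finset.card_univ_diff]
    simp
  have hσB : (∑ i ∈ Finset.univ \ S, u i) ≤ B := by
    rw [hB]
    exact Finset.sum_le_sum_of_subset (Finset.subset_univ _)
  -- the greedy computation
  have hgreedy : PB.greedyCost EF prec = L.foldl (gstep B w) ∅ := rfl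
  have hWc : Lc.foldl (gstep B w) ∅ = Uc := by
    rw [foldl_gstep_all_fit B w ∅ Lc hndc (fun c _ => Finset.notMem_empty c)
      (by rw [hLcF, hUcsum]; simpa using hσB), Finset.empty_union, hLcF]
  have hdis : ∀ c ∈ Ld, c ∉ Uc := by
    intro c hc hcU
    have : c ∈ Ud := hLdF ▸ List.mem_toFinset.2 hc
    obtain ⟨j, -, rfl⟩ := Finset.mem_image.1 this
    obtain ⟨i, -, hie⟩ := Finset.mem_image.1 hcU
    exact absurd hie (by simp [ci8, dj8])
  have hγd : ∀ c ∈ Ld, w c = t + 1 := by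
    intro c hc
    have : c ∈ Ud := hLdF ▸ List.mem_toFinset.2 hc
    obtain ⟨j, -, rfl⟩ := Finset.mem_image.1 this
    rfl
  obtain ⟨q, hqlen, hsum, halt, hzero⟩ :=
    foldl_gstep_uniform B w (t + 1) Uc Ld hndd hdis hγd
  have hLdlen : Ld.length = k + 1 - D.card := by
    rw [← List.toFinset_card_of_nodup hndd, hLdF, hUdcard]
  have hiff := mem_foldl_gstep_split B w p l₁ l₂ np1 np2
  rw [← hsplit, ← hgreedy, happ, List.foldl_append, hWc, hwp, hsum, hUcsum] at hiff
  rw [hLdlen] at hqlen halt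
  rw [hsum, hUcsum] at halt
  rw [hUcsum] at hzero
  exact ⟨q, hqlen, hiff, halt, hzero⟩

lemma core8p (hu : ∀ i, 0 < u i) (ht : 0 < t) (hut : ∀ i, u i < t)
    {prec : Proj8 n k → Proj8 n k → Bool}
    (hlin : IsStrictTotalOrder (Proj8 n k) fun a b => prec a b = true)
    (F : Finset (Unit × Proj8 n k)) (S : Finset (Fin n)) (D : Finset (Fin (k+1)))
    (hG : F.image Prod.snd = insert (pProj8 n k) (S.image (ci8 n k) ∪ D.image (dj8 n k)))
    (hst : ∑ i ∈ S, u i < t) :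
    pProj8 n k ∉ PB.greedyCost ((E8 u t k).flip F) prec := by
  classical
  set EF := (E8 u t k).flip F with hEF
  set sc := EF.score with hsc
  set w : Proj8 n k → ℕ := cost8 u t k with hwdef
  set G := F.image Prod.snd with hGdef
  set B := ∑ j, u j with hB
  set p : Proj8 n k := pProj8 n k with hp
  have hpG : p ∈ G := by rw [hG]; exact Finset.mem_insert_self _ _
  have hciG : ∀ i, (ci8 n k i ∈ G) ↔ i ∈ S := by
    intro i; rw [hG]; simp [ci8, dj8, hp, pProj8]
  have hdjG : ∀ j, (dj8 n k j ∈ G) ↔ j ∈ D := by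
    intro j; rw [hG]; simp [ci8, dj8, hp, pProj8]
  have hciG' : ∀ i, ((Sum.inr (Sum.inl i) : Proj8 n k) ∈ G) ↔ i ∈ S := hciG
  have hdjG' : ∀ j, ((Sum.inr (Sum.inr j) : Proj8 n k) ∈ G) ↔ j ∈ D := hdjG
  have hscore : ∀ c, sc c = if c ∈ symmDiff (Finset.univ.erase p) G then 1 else 0 :=
    fun c => score_flip8 u t F c
  have hscp : sc p = 1 := by
    rw [hscore p, if_pos]
    simp [Finset.mem_symmDiff, hpG]
  have hscc : ∀ i, sc (ci8 n k i) = if i ∈ S then 0 else 1 := by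
    intro i
    rw [hscore]
    by_cases h : i ∈ S <;>
      simp [Finset.mem_symmDiff, hciG', h, ci8, hp, pProj8]
  have hscd : ∀ j, sc (dj8 n k j) = if j ∈ D then 0 else 1 := by
    intro j
    rw [hscore]
    by_cases h : j ∈ D <;>
      simp [Finset.mem_symmDiff, hdjG', h, dj8, hp, pProj8]
  have hwp : w p = t := rfl
  have hwc : ∀ i, w (ci8 n k i) = u i := fun i => rfl
  have hwd : ∀ j, w (dj8 n k j) = t + 1 := fun j => rfl
  have hwpos : ∀ c, 0 < w c := by
    intro c
    rcases c with _ | (i | j)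
    · exact ht
    · exact hu i
    · exact Nat.succ_pos t
  set r : Proj8 n k → Proj8 n k → Bool := rrel sc w prec with hrdef
  set L : List (Proj8 n k) := (Finset.univ : Finset (Proj8 n k)).toList.mergeSort r with hL
  have hpair : L.Pairwise (fun a b => r a b = true) := by
    exact List.pairwise_mergeSort (le := r)
      (rrel_trans sc w hwpos prec hlin) (rrel_total sc w prec hlin) _
  have hnodup : L.Nodup :=
    ((List.mergeSort_perm (Finset.univ : Finset (Proj8 n k)).toList r).nodup_iff).2
      (Finset.nodup_toList _)
  have hmemL : ∀ x : Proj8 n k, x ∈ L := fun x => List.mem_mergeSort.2 (by simp)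
  obtain ⟨l₁, l₂, hsplit⟩ := List.append_of_mem (hmemL p)
  have hnd : l₁.Nodup ∧ (p :: l₂).Nodup ∧ ∀ a ∈ l₁, a ∉ (p :: l₂) := by
    rw [hsplit] at hnodup
    exact ⟨hnodup.of_append_left, hnodup.of_append_right,
      fun a ha hb => (List.disjoint_of_nodup_append hnodup) ha hb⟩
  have np1 : p ∉ l₁ := fun h => hnd.2.2 p h (List.mem_cons_self)
  have np2 : p ∉ l₂ := (List.nodup_cons.1 hnd.2.1).1
  have hpairs := hsplit ▸ hpair
  obtain ⟨hpair1, hpair2, hcross⟩ := List.pairwise_append.1 hpairs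
  have hrxp : ∀ x ∈ l₁, r x p = true := fun x hx =>
    hcross x hx p (List.mem_cons_self)
  have hrpy : ∀ y ∈ l₂, r p y = true := fun y hy =>
    (List.pairwise_cons.1 hpair2).1 y hy
  -- elements of l₁: exactly the unflipped c-projects
  set Uc : Finset (Proj8 n k) := (Finset.univ \ S).image (ci8 n k) with hUc
  have hr_x_p : ∀ x : Proj8 n k, sc x = 0 → r x p = false := by
    intro x h0
    simp only [hrdef, rrel, h0, hscp, hwp, Bool.or_eq_false_iff, Bool.and_eq_false_iff]
    have := hwpos x
    constructor
    · simp
    · left; simp; omega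
  have hr_d_p : ∀ j : Fin (k+1), j ∉ D → r (dj8 n k j) p = false := by
    intro j hj
    simp only [hrdef, rrel, hscd j, if_neg hj, hscp, hwp, hwd,
      Bool.or_eq_false_iff, Bool.and_eq_false_iff]
    constructor
    · simp
    · left; simp
  have hr_p_c : ∀ i : Fin n, i ∉ S → r p (ci8 n k i) = false := by
    intro i hi
    simp only [hrdef, rrel, hscc i, if_neg hi, hscp, hwp, hwc,
      Bool.or_eq_false_iff, Bool.and_eq_false_iff]
    have := hut i
    constructor
    · simp; omega
    · left; simp; omega
  have hl1 : l₁.toFinset = Uc := by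
    ext x
    simp only [List.mem_toFinset, hUc, Finset.mem_image,
      Finset.mem_sdiff, Finset.mem_univ, true_and]
    constructor
    · intro hx
      have hxp : x ≠ p := fun h => np1 (h ▸ hx)
      rcases x with _ | (i | j)
      · exact absurd rfl hxp
      · refine ⟨i, ?_, rfl⟩
        intro hi
        have h0 : sc (ci8 n k i) = 0 := by rw [hscc, if_pos hi]
        have := hr_x_p _ h0
        rw [show (Sum.inr (Sum.inl i) : Proj8 n k) = ci8 n k i from rfl] at hx
        rw [hrxp _ hx] at this
        exact absurd this (by simp)
      · exfalso
        by_cases hj : j ∈ D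
        · have h0 : sc (dj8 n k j) = 0 := by rw [hscd, if_pos hj]
          have := hr_x_p _ h0
          rw [show (Sum.inr (Sum.inr j) : Proj8 n k) = dj8 n k j from rfl] at hx
          rw [hrxp _ hx] at this
          exact absurd this (by simp)
        · have := hr_d_p j hj
          rw [show (Sum.inr (Sum.inr j) : Proj8 n k) = dj8 n k j from rfl] at hx
          rw [hrxp _ hx] at this
          exact absurd this (by simp)
    · rintro ⟨i, hi, rfl⟩
      have hxp : (ci8 n k i : Proj8 n k) ≠ p := by simp [ci8, hp, pProj8]
      have hxL := hmemL (ci8 n k i)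
      rw [hsplit, List.mem_append, List.mem_cons] at hxL
      rcases hxL with h | h | h
      · exact h
      · exact absurd h hxp
      · have := hrpy _ h
        rw [hr_p_c i hi] at this
        exact absurd this (by simp)
  have hinjc : Function.Injective (ci8 n k) := fun a b h => by
    simpa [ci8] using h
  have hUcsum : ∑ x ∈ Uc, w x = ∑ i ∈ Finset.univ \ S, u i := by
    rw [hUc, Finset.sum_image (fun a _ b _ h => hinjc h)]
    rfl
  have hsdiff : (∑ i ∈ Finset.univ \ S, u i) + ∑ i ∈ S, u i = B := by
    rw [hB]
    exact Finset.sum_sdiff (Finset.subset_univ S)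
  have hgreedy : PB.greedyCost EF prec = L.foldl (gstep B w) ∅ := rfl
  have hW1 : l₁.foldl (gstep B w) ∅ = Uc := by
    rw [foldl_gstep_all_fit B w ∅ l₁ hnd.1 (fun c _ => Finset.notMem_empty c)
      (by rw [hl1, hUcsum]; simp; omega), Finset.empty_union, hl1]
  have hiff := mem_foldl_gstep_split B w p l₁ l₂ np1 np2
  rw [← hsplit, ← hgreedy, hW1, hwp, hUcsum] at hiff
  rw [hiff]
  omega

end Core
theorem stmt8 (n k t : ℕ) (u : Fin n → ℕ) (hu : ∀ i, 0 < u i)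
    (ht : 0 < t) (hk : 0 < k) (hut : ∀ i, u i < t) (hkn : k < n)
    (hsmall : ∀ S : Finset (Fin n), S.card < k → ∑ i ∈ S, u i < t)
    (prec : Proj8 n k → Proj8 n k → Bool)
    (hlin : IsStrictTotalOrder (Proj8 n k) fun a b => prec a b = true)
    (hpfirst : ∀ c : Proj8 n k, c ≠ pProj8 n k → prec (pProj8 n k) c = true) :
    (∃ F : Finset (Unit × Proj8 n k), F.card ≤ k ∧
        pProj8 n k ∈ PB.greedyCost ((E8 u t k).flip F) prec) ↔
      ∃ S : Finset (Fin n), S.card = k ∧ ∑ i ∈ S, u i = t := by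
  classical
  have hinjc : Function.Injective (ci8 n k) := fun a b h => by simpa [ci8] using h
  have hinjd : Function.Injective (dj8 n k) := fun a b h => by simpa [dj8] using h
  constructor
  · rintro ⟨F, hFcard, hpmem⟩
    set G := F.image Prod.snd with hGdef
    have hGcard : G.card ≤ k := le_trans Finset.card_image_le hFcard
    set S := Finset.univ.filter (fun i => ci8 n k i ∈ G) with hS
    set D := Finset.univ.filter (fun j => dj8 n k j ∈ G) with hD
    have hdisj : Disjoint (S.image (ci8 n k)) (D.image (dj8 n k)) := by
      simp only [Finset.disjoint_left, Finset.mem_image]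
      rintro x ⟨i, -, rfl⟩ ⟨j, -, hje⟩
      exact absurd hje (by simp [ci8, dj8])
    have huc : (S.image (ci8 n k) ∪ D.image (dj8 n k)).card = S.card + D.card := by
      rw [Finset.card_union_of_disjoint hdisj, Finset.card_image_of_injective _ hinjc,
        Finset.card_image_of_injective _ hinjd]
    have hpU : pProj8 n k ∉ S.image (ci8 n k) ∪ D.image (dj8 n k) := by
      simp only [Finset.mem_union, Finset.mem_image, not_or]
      constructor
      · rintro ⟨i, -, hie⟩; exact absurd hie (by simp [ci8, pProj8])
      · rintro ⟨j, -, hje⟩; exact absurd hje (by simp [dj8, pProj8])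
    by_cases hpG : pProj8 n k ∈ G
    · exfalso
      have hG : G = insert (pProj8 n k) (S.image (ci8 n k) ∪ D.image (dj8 n k)) := by
        ext x
        rcases x with _ | (i | j)
        · simp only [Finset.mem_insert, Finset.mem_union, Finset.mem_image]
          constructor
          · intro h; left; rfl
          · intro h; exact hpG
        · simp only [hS, hD, Finset.mem_insert, Finset.mem_union, Finset.mem_image, Finset.mem_filter, Finset.mem_univ, true_and]; simp [hS, ci8, dj8, pProj8]
        · simp only [hS, hD, Finset.mem_insert, Finset.mem_union, Finset.mem_image, Finset.mem_filter, Finset.mem_univ, true_and]; simp [hD, ci8, dj8, pProj8]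
      have hcard : S.card + D.card + 1 ≤ k := by
        have h2 : G.card = S.card + D.card + 1 := by
          rw [hG, Finset.card_insert_of_notMem hpU, huc]
        omega
      have hScard : S.card < k := by omega
      exact core8p hu ht hut hlin F S D hG (hsmall S hScard) hpmem
    · have hG : G = S.image (ci8 n k) ∪ D.image (dj8 n k) := by
        ext x
        rcases x with _ | (i | j)
        · simp only [Finset.mem_union, Finset.mem_image]
          constructor
          · intro h; exact absurd h hpG
          · rintro (⟨i, -, hie⟩ | ⟨j, -, hje⟩)
            · exact absurd hie (by simp [ci8, pProj8])
            · exact absurd hje (by simp [dj8, pProj8])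
        · simp only [hS, hD, Finset.mem_insert, Finset.mem_union, Finset.mem_image, Finset.mem_filter, Finset.mem_univ, true_and]; simp [hS, ci8, dj8]
        · simp only [hS, hD, Finset.mem_insert, Finset.mem_union, Finset.mem_image, Finset.mem_filter, Finset.mem_univ, true_and]; simp [hD, ci8, dj8]
      have hcard : S.card + D.card ≤ k := by rw [← huc, ← hG]; exact hGcard
      obtain ⟨q, hqle, hiff, halt, -⟩ := core8 hu ht hut hlin hpfirst F S D hG
      have hple := hiff.1 hpmem
      have hsdiff : (∑ i ∈ Finset.univ \ S, u i) + ∑ i ∈ S, u i = ∑ j, u j :=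
        Finset.sum_sdiff (Finset.subset_univ S)
      obtain ⟨Q, hQ⟩ : ∃ Q, q * (t + 1) = Q := ⟨_, rfl⟩
      rw [hQ] at hple halt
      have hq1 : q = 0 ∨ t + 1 ≤ Q := by
        rcases Nat.eq_zero_or_pos q with h | h
        · exact Or.inl h
        · exact Or.inr (by rw [← hQ]; exact Nat.le_mul_of_pos_left _ h)
      have hq0Q : q = 0 → Q = 0 := fun h => by rw [← hQ, h, Nat.zero_mul]
      -- Q + t ≤ s
      have hQs : Q + t ≤ ∑ i ∈ S, u i := by omega
      have hs2t : (∑ i ∈ S, u i) < 2 * t := by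
        by_contra hcon
        push_neg at hcon
        have hSne : S.Nonempty := by
          refine Finset.nonempty_iff_ne_empty.2 fun hemp => ?_
          rw [hemp] at hcon
          simp at hcon
          omega
        obtain ⟨i₀, hi₀⟩ := hSne
        have hce : (S.erase i₀).card < k := by
          have h1 := Finset.card_erase_of_mem hi₀
          have h2 : 0 < S.card := Finset.card_pos.2 ⟨i₀, hi₀⟩
          omega
        have he := hsmall _ hce
        have hsplit := Finset.add_sum_erase S u hi₀
        have := hut i₀
        omega
      have hq0 : q = 0 := by
        rcases hq1 with h | h
        · exact h
        · omega
      have hQ0 : Q = 0 := hq0Q hq0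
      rcases halt with h | h
      · omega
      · have hseq : (∑ i ∈ S, u i) = t := by omega
        have hScard : S.card = k := by
          by_contra hne
          have hlt : S.card < k := lt_of_le_of_ne (by omega) hne
          have := hsmall S hlt
          omega
        exact ⟨S, hScard, hseq⟩
  · rintro ⟨S, hScard, hSsum⟩
    refine ⟨S.image (fun i => ((), ci8 n k i)), ?_, ?_⟩
    · exact le_trans Finset.card_image_le (le_of_eq hScard)
    · have hG : (S.image (fun i => ((), ci8 n k i))).image Prod.snd =
          S.image (ci8 n k) ∪ (∅ : Finset (Fin (k+1))).image (dj8 n k) := by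
        rw [Finset.image_image,
          show (Prod.snd ∘ fun i => ((), ci8 n k i)) = ci8 n k from rfl]
        simp
      obtain ⟨q, hqle, hiff, -, hzero⟩ := core8 hu ht hut hlin hpfirst _ S ∅ hG
      have hsdiff : (∑ i ∈ Finset.univ \ S, u i) + ∑ i ∈ S, u i = ∑ j, u j :=
        Finset.sum_sdiff (Finset.subset_univ S)
      have hq0 : q = 0 := by
        rcases hzero with h | h
        · exact h
        · exfalso; omega
      rw [hq0] at hiff
      exact hiff.2 (by simpa using by omega)
end
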